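/- arXiv:1802.09648 — 4 statements merged into one kernel-verified Lean document; each statement's English description precedes it below -/
import Mathlib

section
/- Let n, d be integers with 1 ≤ d < n−1 and let Γ ⊂ ℝⁿ be a closed d-Ahlfors regular set with constant C₀. Then there exists a constant c ∈ (0,1), depending only on d, n, C₀, such that for every Λ ≥ 1, every s > 0, and every pair of points X₁, X₂ ∈ Ω = ℝⁿ ∖ Γ with δ(X₁) ≥ s, δ(X₂) ≥ s and |X₁ − X₂| ≤ Λ s, there exist points Y₁ ∈ B(X₁, s/2) and Y₂ ∈ B(X₂, s/2) such that the line segment [Y₁, Y₂] satisfies dist([Y₁, Y₂], Γ) ≥ c Λ^{−d/(n−1−d)} s. -/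
open MeasureTheory Metric Set
open scoped ENNReal NNReal Topology

set_option maxHeartbeats 800000

noncomputable section

abbrev Pt (n : ℕ) := EuclideanSpace ℝ (Fin n)

/-- A closed set `Γ ⊆ ℝⁿ` is `d`-Ahlfors regular with constant `C₀`. -/
def AhlforsRegular (n d : ℕ) (C₀ : ℝ) (Γ : Set (Pt n)) : Prop :=
  ∀ q ∈ Γ, ∀ r : ℝ, 0 < r →
    ENNReal.ofReal (C₀⁻¹ * r ^ d) ≤ μH[(d : ℝ)] (ball q r ∩ Γ) ∧
    μH[(d : ℝ)] (ball q r ∩ Γ) ≤ ENNReal.ofReal (C₀ * r ^ d)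

lemma packing_lemma (n d : ℕ) (C₀ : ℝ) (hC₀ : 1 ≤ C₀) (Γ : Set (Pt n)) (hΓ : IsClosed Γ)
    (hAR : AhlforsRegular n d C₀ Γ) (q₀ : Pt n) (hq₀ : q₀ ∈ Γ) (R r : ℝ)
    (hr : 0 < r) (hrR : r ≤ R) :
    ∃ T : Finset (Pt n), ↑T ⊆ Γ ∧ (Γ ∩ closedBall q₀ R ⊆ ⋃ q ∈ T, ball q r) ∧
      (T.card : ℝ) ≤ C₀^2 * (4*R/r)^d := by
  classical
  have hC₀0 : (0:ℝ) < C₀ := lt_of_lt_of_le one_pos hC₀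
  have hR : (0:ℝ) < R := lt_of_lt_of_le hr hrR
  have hbound : ∀ S : Finset (Pt n), ↑S ⊆ Γ ∩ closedBall q₀ R →
      (∀ a ∈ S, ∀ b ∈ S, a ≠ b → r ≤ dist a b) → (S.card : ℝ) ≤ C₀^2 * (4*R/r)^d := by
    intro S hSsub hSsep
    have hdisj : (↑S : Set (Pt n)).PairwiseDisjoint (fun q => ball q (r/2) ∩ Γ) := by
      intro a ha b hb hab
      rw [Function.onFun, Set.disjoint_left]
      rintro x ⟨hxa, -⟩ ⟨hxb, -⟩
      have := hSsep a ha b hb hab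
      have : dist a b < r := by
        calc dist a b ≤ dist a x + dist x b := dist_triangle _ _ _
        _ < r/2 + r/2 := by
            rw [mem_ball] at hxa hxb
            rw [dist_comm a x]; exact add_lt_add hxa hxb
        _ = r := by ring
      linarith [hSsep a ha b hb hab]
    have hmeas : ∀ q ∈ S, MeasurableSet (ball q (r/2) ∩ Γ) :=
      fun q _ => measurableSet_ball.inter hΓ.measurableSet
    have hsum := measure_biUnion_finset (μ := μH[(d:ℝ)]) hdisj hmeas
    have hUsub : (⋃ q ∈ S, ball q (r/2) ∩ Γ) ⊆ ball q₀ (2*R) ∩ Γ := by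
      intro x hx
      simp only [mem_iUnion, exists_prop] at hx
      obtain ⟨q, hq, hxq, hxΓ⟩ := hx
      refine ⟨?_, hxΓ⟩
      have hqB : q ∈ closedBall q₀ R := (hSsub hq).2
      rw [mem_ball]
      calc dist x q₀ ≤ dist x q + dist q q₀ := dist_triangle _ _ _
      _ < r/2 + R := add_lt_add_of_lt_of_le (mem_ball.mp hxq) (mem_closedBall.mp hqB)
      _ ≤ 2*R := by linarith
    have hup : μH[(d:ℝ)] (ball q₀ (2*R) ∩ Γ) ≤ ENNReal.ofReal (C₀ * (2*R)^d) :=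
      (hAR q₀ hq₀ (2*R) (by linarith)).2
    have hlow : ∀ q ∈ S, ENNReal.ofReal (C₀⁻¹ * (r/2)^d) ≤ μH[(d:ℝ)] (ball q (r/2) ∩ Γ) :=
      fun q hq => (hAR q (hSsub hq).1 (r/2) (by linarith)).1
    have hcard : (S.card : ℝ≥0∞) * ENNReal.ofReal (C₀⁻¹ * (r/2)^d)
        ≤ ENNReal.ofReal (C₀ * (2*R)^d) := by
      calc (S.card : ℝ≥0∞) * ENNReal.ofReal (C₀⁻¹ * (r/2)^d)
          = S.card • ENNReal.ofReal (C₀⁻¹ * (r/2)^d) := by rw [nsmul_eq_mul]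
      _ ≤ ∑ q ∈ S, μH[(d:ℝ)] (ball q (r/2) ∩ Γ) := Finset.card_nsmul_le_sum _ _ _ hlow
      _ = μH[(d:ℝ)] (⋃ q ∈ S, ball q (r/2) ∩ Γ) := hsum.symm
      _ ≤ μH[(d:ℝ)] (ball q₀ (2*R) ∩ Γ) := measure_mono hUsub
      _ ≤ _ := hup
    have hlowpos : (0:ℝ) < C₀⁻¹ * (r/2)^d := by positivity
    have hreal : (S.card : ℝ) * (C₀⁻¹ * (r/2)^d) ≤ C₀ * (2*R)^d := by
      rw [← ENNReal.ofReal_le_ofReal_iff (by positivity), ENNReal.ofReal_mul (by positivity)]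
      rwa [ENNReal.ofReal_natCast] 
    have hkey : C₀^2 * (4*R/r)^d * (C₀⁻¹ * (r/2)^d) = C₀ * (2*R)^d := by
      field_simp
      ring_nf
      rw [show (4:ℝ) = 2^2 by norm_num, ← pow_mul]
      ring_nf
      have h1 : r ^ d * r⁻¹ ^ d = 1 := by rw [← mul_pow, mul_inv_cancel₀ (ne_of_gt hr), one_pow]
      have h2 : (1/2:ℝ)^d * 2^(d*2) = 2^d := by
        rw [pow_mul, one_div, inv_pow, sq, ← mul_assoc, inv_mul_cancel₀ (by positivity), one_mul]
      linear_combination (R^d * (1/2:ℝ)^d * 2^(d*2)) * h1 + R^d * h2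
    have : (S.card : ℝ) ≤ (C₀ * (2*R)^d) / (C₀⁻¹ * (r/2)^d) := (le_div_iff₀ hlowpos).mpr hreal
    rwa [← hkey, mul_div_assoc, div_self (ne_of_gt hlowpos), mul_one] at this
  set A : Set ℕ := {k | ∃ S : Finset (Pt n), ↑S ⊆ Γ ∩ closedBall q₀ R ∧
      (∀ a ∈ S, ∀ b ∈ S, a ≠ b → r ≤ dist a b) ∧ S.card = k} with hA
  have hA0 : 0 ∈ A := ⟨∅, by simp, by simp, rfl⟩
  have hAbdd : BddAbove A := by
    refine ⟨⌊C₀^2 * (4*R/r)^d⌋₊, fun k hk => ?_⟩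
    obtain ⟨S, h1, h2, h3⟩ := hk
    exact Nat.le_floor (h3 ▸ hbound S h1 h2)
  obtain ⟨S, hS1, hS2, hScard⟩ := Nat.sSup_mem ⟨0, hA0⟩ hAbdd
  refine ⟨S, fun q hq => (hS1 hq).1, ?_, hScard ▸ hbound S hS1 hS2⟩
  intro x hx
  by_contra hcov
  simp only [mem_iUnion, exists_prop, not_exists, not_and, mem_ball, not_lt] at hcov
  have hxS : x ∉ S := by
    intro hxS
    have := hcov x hxS
    simp at this
    linarith
  have hmem : S.card + 1 ∈ A := by
    refine ⟨insert x S, ?_, ?_, ?_⟩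
    · intro y hy
      rcases Finset.mem_insert.mp hy with h | h
      · exact h ▸ hx
      · exact hS1 h
    · intro a ha b hb hab
      rcases Finset.mem_insert.mp ha with ha' | ha' <;>
        rcases Finset.mem_insert.mp hb with hb' | hb'
      · exact absurd (ha'.trans hb'.symm) hab
      · rw [ha']; exact hcov b hb'
      · rw [hb', dist_comm]; exact hcov a ha'
      · exact hS2 a ha' b hb' hab
    · rw [Finset.card_insert_of_notMem hxS]
  have : S.card + 1 ≤ sSup A := le_csSup hAbdd hmem
  omega

lemma segment_cover (n d : ℕ) (C₀ : ℝ) (hC₀ : 1 ≤ C₀) (Γ : Set (Pt n)) (hΓ : IsClosed Γ)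
    (hAR : AhlforsRegular n d C₀ Γ) (X₁ X₂ : Pt n) (Λ s ρ : ℝ)
    (hΛ : 1 ≤ Λ) (hs : 0 < s) (hρ : 0 < ρ) (hρs : ρ ≤ s) (hXX : dist X₁ X₂ ≤ Λ * s) :
    ∃ Q : Finset (Pt n), ↑Q ⊆ Γ ∧
      (∀ z ∈ Γ, ∀ b ∈ Icc (0:ℝ) 1, dist z (X₁ + b • (X₂ - X₁)) ≤ s/2 → ∃ q ∈ Q, dist z q < ρ) ∧
      (Q.card : ℝ) ≤ 3*Λ*C₀^2*(12*s/ρ)^d := by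
  classical
  set K : ℕ := ⌈Λ⌉₊ with hK
  have hK1 : 1 ≤ K := Nat.one_le_ceil_iff.mpr (by linarith)
  have hKΛ : Λ ≤ K := Nat.le_ceil Λ
  have hKpos : (0:ℝ) < K := by exact_mod_cast lt_of_lt_of_le one_pos (by exact_mod_cast hK1)
  set Z : ℕ → Pt n := fun i => X₁ + ((i:ℝ)/K) • (X₂ - X₁) with hZ
  have hpiece : ∀ i : ℕ, ∃ T : Finset (Pt n), ↑T ⊆ Γ ∧
      (Γ ∩ closedBall (Z i) (3*s/2) ⊆ ⋃ q ∈ T, ball q ρ) ∧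
      (T.card : ℝ) ≤ C₀^2*(12*s/ρ)^d := by
    intro i
    rcases Set.eq_empty_or_nonempty (Γ ∩ closedBall (Z i) (3*s/2)) with he | ⟨q', hq'Γ, hq'B⟩
    · exact ⟨∅, by simp, by rw [he]; simp, by simp; positivity⟩
    · obtain ⟨T, hT1, hT2, hT3⟩ := packing_lemma n d C₀ hC₀ Γ hΓ hAR q' hq'Γ (3*s) ρ hρ
        (by linarith)
      refine ⟨T, hT1, ?_, by
        calc (T.card : ℝ) ≤ C₀^2 * (4*(3*s)/ρ)^d := hT3
        _ = C₀^2*(12*s/ρ)^d := by ring_nf⟩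
      intro z hz
      apply hT2
      refine ⟨hz.1, ?_⟩
      rw [mem_closedBall]
      calc dist z q' ≤ dist z (Z i) + dist (Z i) q' := dist_triangle _ _ _
      _ ≤ 3*s/2 + 3*s/2 := add_le_add (mem_closedBall.mp hz.2) (by
          rw [dist_comm]; exact mem_closedBall.mp hq'B)
      _ = 3*s := by ring
  choose T hT1 hT2 hT3 using hpiece
  refine ⟨(Finset.range (K+1)).biUnion T, ?_, ?_, ?_⟩
  · intro q hq
    obtain ⟨i, _, hqT⟩ := Finset.mem_biUnion.mp hq
    exact hT1 i hqT
  · intro z hzΓ b hb hzseg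
    have hbK : (0:ℝ) ≤ b * K := mul_nonneg hb.1 hKpos.le
    set i : ℕ := ⌊b * K⌋₊ with hi
    have hiK : i ≤ K := by
      apply Nat.floor_le_floor (R := ℝ) (mul_le_of_le_one_left hKpos.le hb.2) |>.trans
      simp [Nat.floor_natCast]
    have hfl : (i:ℝ) ≤ b * K := Nat.floor_le hbK
    have hfu : b * K < i + 1 := Nat.lt_floor_add_one _
    have hdistZ : dist (X₁ + b • (X₂ - X₁)) (Z i) ≤ s := by
      rw [hZ]
      simp only [dist_eq_norm]
      have : (X₁ + b • (X₂ - X₁)) - (X₁ + ((i:ℝ)/K) • (X₂ - X₁))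
          = (b - (i:ℝ)/K) • (X₂ - X₁) := by module
      rw [this, norm_smul]
      have h1 : |b - (i:ℝ)/K| ≤ 1/K := by
        have e1 : (i:ℝ)/K ≤ b := (div_le_iff₀ hKpos).mpr hfl
        have e2 : b ≤ ((i:ℝ)+1)/K := (le_div_iff₀ hKpos).mpr hfu.le
        have e3 : ((i:ℝ)+1)/K = (i:ℝ)/K + 1/K := by ring
        rw [abs_le]; constructor <;> linarith
      have h2 : ‖X₂ - X₁‖ ≤ Λ * s := by rw [← dist_eq_norm, dist_comm]; exact hXX
      calc |b - (i:ℝ)/K| * ‖X₂ - X₁‖ ≤ (1/K) * (Λ * s) :=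
            mul_le_mul h1 h2 (norm_nonneg _) (by positivity)
      _ ≤ (1/Λ) * (Λ * s) := by
            apply mul_le_mul_of_nonneg_right _ (by positivity)
            apply one_div_le_one_div_of_le (by linarith) hKΛ
      _ = s := by field_simp
    have hzZ : z ∈ Γ ∩ closedBall (Z i) (3*s/2) := by
      refine ⟨hzΓ, mem_closedBall.mpr ?_⟩
      calc dist z (Z i) ≤ dist z (X₁ + b • (X₂ - X₁)) + dist (X₁ + b • (X₂ - X₁)) (Z i) :=
            dist_triangle _ _ _
      _ ≤ s/2 + s := add_le_add hzseg hdistZ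
      _ = 3*s/2 := by ring
    have := hT2 i hzZ
    simp only [mem_iUnion, exists_prop, mem_ball] at this
    obtain ⟨q, hqT, hq⟩ := this
    exact ⟨q, Finset.mem_biUnion.mpr ⟨i, Finset.mem_range.mpr (by omega), hqT⟩, hq⟩
  · calc ((((Finset.range (K+1)).biUnion T).card : ℕ) : ℝ)
        ≤ ((∑ i ∈ Finset.range (K+1), (T i).card : ℕ) : ℝ) := by
          exact_mod_cast Finset.card_biUnion_le
    _ = ∑ i ∈ Finset.range (K+1), ((T i).card : ℝ) := by push_cast; rfl
    _ ≤ ∑ i ∈ Finset.range (K+1), C₀^2*(12*s/ρ)^d := Finset.sum_le_sum (fun i _ => hT3 i)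
    _ = (K+1) * (C₀^2*(12*s/ρ)^d) := by rw [Finset.sum_const, Finset.card_range]; push_cast; ring
    _ ≤ (3*Λ) * (C₀^2*(12*s/ρ)^d) := by
          apply mul_le_mul_of_nonneg_right _ (by positivity)
          have : (K:ℝ) ≤ Λ + 1 := le_of_lt (Nat.ceil_lt_add_one (by linarith))
          linarith
    _ = 3*Λ*C₀^2*(12*s/ρ)^d := by ring

lemma slice_cover (n : ℕ) (s ρ : ℝ) (hs : 0 < s) (hρ : 0 < ρ) (hρs : ρ ≤ s/32)
    (q Xnear Xfar Yfar : Pt n)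
    (h1 : 3*s/4 ≤ dist Yfar q) (h2 : dist q Xnear ≤ dist q Xfar) (h3 : dist Yfar Xfar ≤ s/4) :
    {Y : Pt n | Y ∈ closedBall Xnear (s/4) ∧ ∃ l ∈ Icc (0:ℝ) 1,
        (1-l) • Y + l • Yfar ∈ closedBall q (2*ρ)}
    ⊆ ⋃ i ∈ Finset.range (⌈s/ρ⌉₊ + 1),
        closedBall (Yfar + (((dist Yfar Xnear) - s/2 + i*ρ)/(dist Yfar q)) • (q - Yfar))
          (13*ρ) := by
  rintro Y ⟨hY, l, ⟨hl0, hl1⟩, hZ⟩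
  set u : Pt n := q - Yfar with hu
  have hnu : dist Yfar q = ‖u‖ := by rw [hu, dist_eq_norm, norm_sub_rev]
  have hupos : (0:ℝ) < ‖u‖ := by rw [← hnu]; linarith
  set Z : Pt n := (1-l) • Y + l • Yfar with hZdef
  have hZq : ‖Z - q‖ ≤ 2*ρ := by rw [← dist_eq_norm]; exact mem_closedBall.mp hZ
  have hZY : Z - Yfar = (1-l) • (Y - Yfar) := by rw [hZdef]; module
  have hYX : ‖Y - Xnear‖ ≤ s/4 := by rw [← dist_eq_norm]; exact mem_closedBall.mp hY
  have h6 : ‖u‖ - 2*ρ ≤ ‖Z - Yfar‖ := by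
    have : ‖u‖ ≤ ‖Z - Yfar‖ + ‖Z - q‖ := by
      calc ‖u‖ = ‖(Z - Yfar) - (Z - q)‖ := by rw [hu]; congr 1; abel
      _ ≤ ‖Z - Yfar‖ + ‖Z - q‖ := norm_sub_le _ _
    linarith
  have hρu : 2*ρ ≤ ‖u‖/12 := by
    have : s/16 ≤ ‖u‖/12 := by rw [← hnu]; linarith
    linarith
  have h7 : 11/12 * ‖u‖ ≤ ‖Z - Yfar‖ := by linarith
  have hYq : ‖Y - q‖ ≤ ‖u‖ + s/2 := by
    calc ‖Y - q‖ ≤ ‖Y - Xnear‖ + dist Xnear q := by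
          rw [dist_eq_norm]; exact norm_sub_le_norm_sub_add_norm_sub _ _ _
    _ ≤ s/4 + (dist q Yfar + dist Yfar Xfar) := by
          rw [dist_comm Xnear q]
          exact add_le_add hYX (h2.trans (dist_triangle _ _ _))
    _ ≤ s/4 + (‖u‖ + s/4) := by
          rw [dist_comm q Yfar, hnu]; linarith
    _ = ‖u‖ + s/2 := by ring
  have hYY : ‖Y - Yfar‖ ≤ 8/3 * ‖u‖ := by
    have hsu : s/2 ≤ 2/3 * ‖u‖ := by rw [← hnu] at hupos ⊢; linarith
    calc ‖Y - Yfar‖ ≤ ‖Y - q‖ + ‖q - Yfar‖ := norm_sub_le_norm_sub_add_norm_sub _ _ _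
    _ ≤ (‖u‖ + s/2) + ‖u‖ := by rw [hu]; exact add_le_add hYq le_rfl
    _ ≤ 8/3 * ‖u‖ := by linarith
  have hZYnorm : ‖Z - Yfar‖ = (1-l) * ‖Y - Yfar‖ := by
    rw [hZY, norm_smul, Real.norm_eq_abs, abs_of_nonneg (by linarith)]
  have hquarter : 1/4 ≤ 1 - l := by
    by_contra hc
    push_neg at hc
    have h8 : (1-l) * ‖Y - Yfar‖ ≤ (1-l) * (8/3 * ‖u‖) :=
      mul_le_mul_of_nonneg_left hYY (by linarith)
    nlinarith [hZYnorm, h7, hupos]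
  set t : ℝ := (1-l)⁻¹ with ht
  have hlne : (1-l) ≠ 0 := by intro h; rw [h] at hquarter; linarith
  have htpos : 0 < t := by rw [ht]; exact inv_pos.mpr (by linarith)
  have htmul : (1-l) * t = 1 := by rw [ht]; exact mul_inv_cancel₀ hlne
  have ht1 : 1 ≤ t := by
    rw [ht]
    rw [le_inv_comm₀ one_pos (by linarith)]
    linarith
  have ht4 : t ≤ 4 := by
    rw [ht]
    rw [inv_le_comm₀ (by linarith) (by norm_num)]
    linarith
  have hYrep : Y - Yfar = t • (Z - Yfar) := by
    rw [hZY, smul_smul, ht, inv_mul_cancel₀ hlne, one_smul]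
  set P : Pt n := Yfar + t • u with hP
  have hYP : ‖Y - P‖ ≤ 8*ρ := by
    have : Y - P = t • (Z - q) := by
      have h9 : Y = Yfar + t • (Z - Yfar) := by rw [← hYrep]; abel
      rw [h9, hP, hu]
      module
    rw [this, norm_smul, Real.norm_eq_abs, abs_of_nonneg (by linarith)]
    calc t * ‖Z - q‖ ≤ 4 * (2*ρ) := mul_le_mul ht4 hZq (norm_nonneg _) (by norm_num)
    _ = 8*ρ := by ring
  have hPX : ‖P - Xnear‖ ≤ s/2 := by
    calc ‖P - Xnear‖ ≤ ‖P - Y‖ + ‖Y - Xnear‖ := norm_sub_le_norm_sub_add_norm_sub _ _ _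
    _ ≤ 8*ρ + s/4 := add_le_add (by rw [norm_sub_rev]; exact hYP) hYX
    _ ≤ s/2 := by linarith
  set A : ℝ := dist Yfar Xnear with hA
  have hPY : ‖P - Yfar‖ = t * ‖u‖ := by
    rw [hP]
    simp only [add_sub_cancel_left]
    rw [norm_smul, Real.norm_eq_abs, abs_of_nonneg (by linarith)]
  have htuA : |t * ‖u‖ - A| ≤ s/2 := by
    have := abs_norm_sub_norm_le (P - Yfar) (Xnear - Yfar)
    have he : (P - Yfar) - (Xnear - Yfar) = P - Xnear := by abel
    rw [he, hPY] at this
    have hAe : ‖Xnear - Yfar‖ = A := by rw [hA, dist_eq_norm, norm_sub_rev]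
    rw [hAe] at this
    linarith [this.trans hPX]
  set τ : ℝ := t * ‖u‖ - (A - s/2) with hτ
  have hτ0 : 0 ≤ τ := by rw [hτ]; cases abs_le.mp htuA; linarith
  have hτs : τ ≤ s := by rw [hτ]; cases abs_le.mp htuA; linarith
  set i : ℕ := ⌊τ/ρ⌋₊ with hi
  have hiM : i ≤ ⌈s/ρ⌉₊ := by
    have : τ/ρ ≤ s/ρ := by gcongr
    exact (Nat.floor_le_floor this).trans (Nat.floor_le_ceil _)
  have hτi1 : (i:ℝ)*ρ ≤ τ := by
    have := Nat.floor_le (by positivity : (0:ℝ) ≤ τ/ρ)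
    rw [← hi] at this
    calc (i:ℝ)*ρ ≤ (τ/ρ)*ρ := mul_le_mul_of_nonneg_right this hρ.le
    _ = τ := by field_simp
  have hτi2 : τ ≤ (i:ℝ)*ρ + ρ := by
    have := Nat.lt_floor_add_one (τ/ρ)
    rw [← hi] at this
    have h10 : τ < ((i:ℝ)+1)*ρ := by
      calc τ = (τ/ρ)*ρ := by field_simp
      _ < ((i:ℝ)+1)*ρ := mul_lt_mul_of_pos_right this hρ
    linarith
  simp only [mem_iUnion, exists_prop]
  refine ⟨i, Finset.mem_range.mpr (by omega), ?_⟩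
  rw [mem_closedBall, hnu]
  set c : Pt n := Yfar + ((A - s/2 + i*ρ)/‖u‖) • u with hc
  have hPc : ‖P - c‖ ≤ ρ := by
    have he2 : P - c = (t - (A - s/2 + i*ρ)/‖u‖) • u := by
      rw [hP, hc]; module
    rw [he2, norm_smul, Real.norm_eq_abs]
    have : |t - (A - s/2 + i*ρ)/‖u‖| * ‖u‖ = |t * ‖u‖ - (A - s/2 + i*ρ)| := by
      rw [← abs_of_pos hupos, ← abs_mul]
      congr 1
      rw [abs_of_pos hupos, sub_mul, div_mul_cancel₀ _ hupos.ne']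
    rw [this, abs_le]
    rw [hτ] at hτi1 hτi2
    constructor <;> linarith
  calc dist Y c ≤ ‖Y - P‖ + ‖P - c‖ := by
        rw [dist_eq_norm]; exact norm_sub_le_norm_sub_add_norm_sub _ _ _
  _ ≤ 8*ρ + ρ := add_le_add hYP hPc
  _ ≤ 13*ρ := by linarith

def BadSet (n : ℕ) (X₁ X₂ q : Pt n) (s ρ : ℝ) : Set (Pt n × Pt n) :=
  {p | p.1 ∈ closedBall X₁ (s/4) ∧ p.2 ∈ closedBall X₂ (s/4) ∧
    ∃ l ∈ Icc (0:ℝ) 1, (1-l) • p.1 + l • p.2 ∈ closedBall q (2*ρ)}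

lemma badSet_isCompact (n : ℕ) (X₁ X₂ q : Pt n) (s ρ : ℝ) :
    IsCompact (BadSet n X₁ X₂ q s ρ) := by
  have : BadSet n X₁ X₂ q s ρ =
      (fun w : (Pt n × Pt n) × ℝ => w.1) ''
        (((closedBall X₁ (s/4) ×ˢ closedBall X₂ (s/4)) ×ˢ Icc (0:ℝ) 1) ∩
          {w : (Pt n × Pt n) × ℝ | (1-w.2) • w.1.1 + w.2 • w.1.2 ∈ closedBall q (2*ρ)}) := by
    ext ⟨y₁, y₂⟩
    simp only [BadSet, Set.mem_image, Set.mem_inter_iff, Set.mem_prod, Set.mem_setOf_eq,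
      Set.mem_Icc]
    constructor
    · rintro ⟨h1, h2, l, ⟨hl0, hl1⟩, h3⟩
      exact ⟨((y₁, y₂), l), ⟨⟨⟨h1, h2⟩, hl0, hl1⟩, h3⟩, rfl⟩
    · rintro ⟨⟨⟨z₁, z₂⟩, l⟩, ⟨⟨⟨h1, h2⟩, hl0, hl1⟩, h3⟩, heq⟩
      cases heq
      exact ⟨h1, h2, l, ⟨hl0, hl1⟩, h3⟩
  rw [this]
  apply IsCompact.image _ continuous_fst
  apply IsCompact.inter_right
  · exact ((isCompact_closedBall _ _).prod (isCompact_closedBall _ _)).prod isCompact_Icc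
  · have hcont : Continuous (fun w : (Pt n × Pt n) × ℝ => (1-w.2) • w.1.1 + w.2 • w.1.2) := by
      fun_prop
    exact IsClosed.preimage hcont Metric.isClosed_closedBall

lemma badSet_measure (n : ℕ) (X₁ X₂ q : Pt n) (s ρ : ℝ)
    (hs : 0 < s) (hρ : 0 < ρ) (hρs : ρ ≤ s/32)
    (h1 : ∀ y ∈ closedBall X₁ (s/4), 3*s/4 ≤ dist y q)
    (h2 : ∀ y ∈ closedBall X₂ (s/4), 3*s/4 ≤ dist y q) :
    volume (BadSet n X₁ X₂ q s ρ) ≤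
      ((⌈s/ρ⌉₊ + 1 : ℕ) : ℝ≥0∞) * (ENNReal.ofReal ((13*ρ)^n) * volume (ball (0:Pt n) 1)) *
        (ENNReal.ofReal ((s/4)^n) * volume (ball (0:Pt n) 1)) := by
  classical
  set V : ℝ≥0∞ := volume (ball (0:Pt n) 1) with hV
  have hmeasBad : MeasurableSet (BadSet n X₁ X₂ q s ρ) :=
    (badSet_isCompact n X₁ X₂ q s ρ).isClosed.measurableSet
  have hballvol : ∀ (x : Pt n), volume (closedBall x (13*ρ)) = ENNReal.ofReal ((13*ρ)^n) * V := by
    intro x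
    rw [Measure.addHaar_closedBall volume x (by positivity), finrank_euclideanSpace_fin]
  have hcovvol : ∀ (cen : ℕ → Pt n),
      volume (⋃ i ∈ Finset.range (⌈s/ρ⌉₊ + 1), closedBall (cen i) (13*ρ)) ≤
        ((⌈s/ρ⌉₊ + 1 : ℕ) : ℝ≥0∞) * (ENNReal.ofReal ((13*ρ)^n) * V) := by
    intro cen
    calc volume (⋃ i ∈ Finset.range (⌈s/ρ⌉₊ + 1), closedBall (cen i) (13*ρ))
        ≤ ∑ i ∈ Finset.range (⌈s/ρ⌉₊ + 1), volume (closedBall (cen i) (13*ρ)) :=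
          measure_biUnion_finset_le _ _
    _ = ((⌈s/ρ⌉₊ + 1 : ℕ) : ℝ≥0∞) * (ENNReal.ofReal ((13*ρ)^n) * V) := by
        simp only [hballvol, Finset.sum_const, Finset.card_range, nsmul_eq_mul]
  have hballX₂ : volume (closedBall X₂ (s/4)) = ENNReal.ofReal ((s/4)^n) * V := by
    rw [Measure.addHaar_closedBall volume X₂ (by positivity), finrank_euclideanSpace_fin]
  have hballX₁ : volume (closedBall X₁ (s/4)) = ENNReal.ofReal ((s/4)^n) * V := by
    rw [Measure.addHaar_closedBall volume X₁ (by positivity), finrank_euclideanSpace_fin]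
  rcases le_total (dist q X₁) (dist q X₂) with hcase | hcase
  · -- q nearer to X₁ : slice in the first coordinate, fixing y = p.2
    rw [MeasureTheory.Measure.volume_eq_prod, Measure.prod_apply_symm hmeasBad]
    have hslice : ∀ y : Pt n,
        volume ((fun x => (x, y)) ⁻¹' BadSet n X₁ X₂ q s ρ) ≤
          (closedBall X₂ (s/4)).indicator
            (fun _ => ((⌈s/ρ⌉₊ + 1 : ℕ) : ℝ≥0∞) * (ENNReal.ofReal ((13*ρ)^n) * V)) y := by
      intro y
      by_cases hy : y ∈ closedBall X₂ (s/4)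
      · rw [Set.indicator_of_mem hy]
        have hsub : ((fun x => (x, y)) ⁻¹' BadSet n X₁ X₂ q s ρ) ⊆
            ⋃ i ∈ Finset.range (⌈s/ρ⌉₊ + 1),
              closedBall (y + (((dist y X₁) - s/2 + i*ρ)/(dist y q)) • (q - y)) (13*ρ) := by
          intro x hx
          obtain ⟨hx1, hx2, l, hl, hx3⟩ := hx
          exact slice_cover n s ρ hs hρ hρs q X₁ X₂ y (h2 y hy) hcase
            (mem_closedBall.mp hy) ⟨hx1, l, hl, hx3⟩
        exact (measure_mono hsub).trans (hcovvol _)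
      · have : ((fun x => (x, y)) ⁻¹' BadSet n X₁ X₂ q s ρ) = ∅ := by
          ext x
          simp only [Set.mem_preimage, Set.mem_empty_iff_false, iff_false]
          rintro ⟨-, h, -⟩
          exact hy h
        rw [this, Set.indicator_of_notMem hy]
        simp
    calc ∫⁻ y, volume ((fun x => (x, y)) ⁻¹' BadSet n X₁ X₂ q s ρ) ≤
        ∫⁻ y, (closedBall X₂ (s/4)).indicator
          (fun _ => ((⌈s/ρ⌉₊ + 1 : ℕ) : ℝ≥0∞) * (ENNReal.ofReal ((13*ρ)^n) * V)) y :=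
          lintegral_mono hslice
    _ = ((⌈s/ρ⌉₊ + 1 : ℕ) : ℝ≥0∞) * (ENNReal.ofReal ((13*ρ)^n) * V) *
          volume (closedBall X₂ (s/4)) := by
        rw [lintegral_indicator_const measurableSet_closedBall]
    _ = _ := by rw [hballX₂]
  · -- q nearer to X₂ : slice in the second coordinate, fixing x = p.1
    rw [MeasureTheory.Measure.volume_eq_prod, Measure.prod_apply hmeasBad]
    have hslice : ∀ x : Pt n,
        volume (Prod.mk x ⁻¹' BadSet n X₁ X₂ q s ρ) ≤
          (closedBall X₁ (s/4)).indicator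
            (fun _ => ((⌈s/ρ⌉₊ + 1 : ℕ) : ℝ≥0∞) * (ENNReal.ofReal ((13*ρ)^n) * V)) x := by
      intro x
      by_cases hx : x ∈ closedBall X₁ (s/4)
      · rw [Set.indicator_of_mem hx]
        have hsub : (Prod.mk x ⁻¹' BadSet n X₁ X₂ q s ρ) ⊆
            ⋃ i ∈ Finset.range (⌈s/ρ⌉₊ + 1),
              closedBall (x + (((dist x X₂) - s/2 + i*ρ)/(dist x q)) • (q - x)) (13*ρ) := by
          intro y hy
          obtain ⟨hy1, hy2, l, hl, hy3⟩ := hy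
          refine slice_cover n s ρ hs hρ hρs q X₂ X₁ x (h1 x hx) hcase
            (mem_closedBall.mp hx) ⟨hy2, 1-l, ⟨by linarith [hl.2], by linarith [hl.1]⟩, ?_⟩
          have : (1-(1-l)) • y + (1-l) • x = (1-l) • x + l • y := by
            rw [sub_sub_cancel]; abel
          rw [this]
          exact hy3
        exact (measure_mono hsub).trans (hcovvol _)
      · have : (Prod.mk x ⁻¹' BadSet n X₁ X₂ q s ρ) = ∅ := by
          ext y
          simp only [Set.mem_preimage, Set.mem_empty_iff_false, iff_false]
          rintro ⟨h, -, -⟩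
          exact hx h
        rw [this, Set.indicator_of_notMem hx]
        simp
    calc ∫⁻ x, volume (Prod.mk x ⁻¹' BadSet n X₁ X₂ q s ρ) ≤
        ∫⁻ x, (closedBall X₁ (s/4)).indicator
          (fun _ => ((⌈s/ρ⌉₊ + 1 : ℕ) : ℝ≥0∞) * (ENNReal.ofReal ((13*ρ)^n) * V)) x :=
          lintegral_mono hslice
    _ = ((⌈s/ρ⌉₊ + 1 : ℕ) : ℝ≥0∞) * (ENNReal.ofReal ((13*ρ)^n) * V) *
          volume (closedBall X₁ (s/4)) := by
        rw [lintegral_indicator_const measurableSet_closedBall]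
    _ = _ := by rw [hballX₁]
/-- Harnack chain condition (Lemma 2.1 of David–Feneuil–Mayboroda): there is a constant
`c ∈ (0,1)`, depending only on `d`, `n`, `C₀`, such that for every `Λ ≥ 1`, `s > 0` and
points `X₁, X₂` of `Ω = ℝⁿ \ Γ` with `δ(Xᵢ) ≥ s` and `|X₁ - X₂| ≤ Λ s`, there are points
`Yᵢ ∈ B(Xᵢ, s/2)` whose joining segment stays at distance at least `c Λ^{-d/(n-1-d)} s`
from `Γ`. -/
theorem harnack_chain_condition (n d : ℕ) (C₀ : ℝ)
    (hd : 1 ≤ d) (hdn : d + 1 < n) (hC₀ : 1 ≤ C₀) :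
    ∃ c : ℝ, c ∈ Set.Ioo (0 : ℝ) 1 ∧
      ∀ Γ : Set (Pt n), IsClosed Γ → Γ.Nonempty → AhlforsRegular n d C₀ Γ →
        ∀ Λ s : ℝ, 1 ≤ Λ → 0 < s →
          ∀ X₁ X₂ : Pt n, X₁ ∉ Γ → X₂ ∉ Γ →
            s ≤ infDist X₁ Γ → s ≤ infDist X₂ Γ → dist X₁ X₂ ≤ Λ * s →
            ∃ Y₁ ∈ ball X₁ (s / 2), ∃ Y₂ ∈ ball X₂ (s / 2),
              ∀ Y ∈ segment ℝ Y₁ Y₂,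
                c * Λ ^ (-(d : ℝ) / ((n : ℝ) - 1 - (d : ℝ))) * s ≤ infDist Y Γ := by

  classical
  have hC₀0 : (0:ℝ) < C₀ := lt_of_lt_of_le one_pos hC₀
  set β : ℕ := n - 1 - d with hβdef
  have hβ1 : 1 ≤ β := by omega
  have hnβ : n = β + d + 1 := by omega
  have hcast : ((n:ℝ) - 1 - (d:ℝ)) = (β : ℝ) := by
    rw [hnβ]; push_cast; ring
  obtain ⟨K₂, hK₂⟩ : ∃ K₂ : ℝ, K₂ = 9 * 12^d * 13^n * C₀^2 := ⟨_, rfl⟩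
  have hK₂pos : 0 < K₂ := by rw [hK₂]; positivity
  obtain ⟨ε, hε⟩ : ∃ ε : ℝ, ε = min (1/32) (1/(2*4^n*K₂)) := ⟨_, rfl⟩
  have hε0 : 0 < ε := by rw [hε]; exact lt_min (by norm_num) (by positivity)
  have hε32 : ε ≤ 1/32 := by rw [hε]; exact min_le_left _ _
  have hεK : ε ≤ 1/(2*4^n*K₂) := by rw [hε]; exact min_le_right _ _
  refine ⟨ε, ⟨hε0, by linarith⟩, ?_⟩
  intro Γ hΓ hne hAR Λ s hΛ hs X₁ X₂ hX₁ hX₂ hδ₁ hδ₂ hXX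
  have hΛ0 : (0:ℝ) < Λ := by linarith
  obtain ⟨L, hL⟩ : ∃ L : ℝ, L = Λ ^ (-(1:ℝ)/(β:ℝ)) := ⟨_, rfl⟩
  have hβr0 : (0:ℝ) < (β:ℝ) := by exact_mod_cast hβ1
  have hL0 : 0 < L := by rw [hL]; exact Real.rpow_pos_of_pos hΛ0 _
  have hL1 : L ≤ 1 := by
    rw [hL]
    exact Real.rpow_le_one_of_one_le_of_nonpos hΛ
      (by rw [neg_div]; exact neg_nonpos.mpr (by positivity))
  have hLβ : L^β * Λ = 1 := by
    rw [hL, ← Real.rpow_natCast (Λ ^ (-(1:ℝ)/(β:ℝ))) β, ← Real.rpow_mul hΛ0.le]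
    rw [show (-(1:ℝ)/(β:ℝ)) * (β:ℕ) = -1 by field_simp]
    rw [Real.rpow_neg_one]
    exact inv_mul_cancel₀ (ne_of_gt hΛ0)
  obtain ⟨ρ, hρdef⟩ : ∃ ρ : ℝ, ρ = ε * L * s := ⟨_, rfl⟩
  have hρ0 : 0 < ρ := by rw [hρdef]; positivity
  have hρs32 : ρ ≤ s/32 := by
    have : ε * L ≤ 1/32 := by
      calc ε * L ≤ ε * 1 := mul_le_mul_of_nonneg_left hL1 hε0.le
      _ = ε := mul_one ε
      _ ≤ 1/32 := hε32
    calc ρ = (ε * L) * s := by rw [hρdef]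
    _ ≤ (1/32) * s := mul_le_mul_of_nonneg_right this hs.le
    _ = s/32 := by ring
  obtain ⟨Q, hQΓ, hQcov, hQcard⟩ := segment_cover n d C₀ hC₀ Γ hΓ hAR X₁ X₂ Λ s ρ hΛ hs hρ0
    (by linarith) hXX
  set V : ℝ≥0∞ := volume (ball (0:Pt n) 1) with hV
  have hVpos : 0 < V := measure_ball_pos _ _ one_pos
  have hVtop : V ≠ ⊤ := measure_ball_lt_top.ne
  -- measure bound on each bad set
  have hBad : ∀ q ∈ Q, volume (BadSet n X₁ X₂ q s ρ) ≤
      ((⌈s/ρ⌉₊ + 1 : ℕ) : ℝ≥0∞) * (ENNReal.ofReal ((13*ρ)^n) * V) *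
        (ENNReal.ofReal ((s/4)^n) * V) := by
    intro q hq
    apply badSet_measure n X₁ X₂ q s ρ hs hρ0 hρs32
    · intro y hy
      have h1 : infDist X₁ Γ ≤ infDist y Γ + dist X₁ y := infDist_le_infDist_add_dist
      have h2 : infDist y Γ ≤ dist y q := infDist_le_dist_of_mem (hQΓ hq)
      have h3 : dist X₁ y ≤ s/4 := by rw [dist_comm]; exact mem_closedBall.mp hy
      linarith
    · intro y hy
      have h1 : infDist X₂ Γ ≤ infDist y Γ + dist X₂ y := infDist_le_infDist_add_dist
      have h2 : infDist y Γ ≤ dist y q := infDist_le_dist_of_mem (hQΓ hq)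
      have h3 : dist X₂ y ≤ s/4 := by rw [dist_comm]; exact mem_closedBall.mp hy
      linarith
  -- total bad measure vs product ball measure
  have hMle : ((⌈s/ρ⌉₊ + 1 : ℕ) : ℝ≥0∞) ≤ ENNReal.ofReal (3*s/ρ) := by
    rw [← ENNReal.ofReal_natCast]
    apply ENNReal.ofReal_le_ofReal
    push_cast
    have h1 : (⌈s/ρ⌉₊ : ℝ) ≤ s/ρ + 1 := le_of_lt (Nat.ceil_lt_add_one (by positivity))
    have h2 : (1:ℝ) ≤ s/ρ := (one_le_div hρ0).mpr (by linarith)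
    calc (⌈s/ρ⌉₊ : ℝ) + 1 ≤ (s/ρ + 1) + 1 := by linarith
    _ ≤ 3*(s/ρ) := by linarith
    _ = 3*s/ρ := by ring
  have hQle : ((Q.card : ℕ) : ℝ≥0∞) ≤ ENNReal.ofReal (3*Λ*C₀^2*(12*s/ρ)^d) := by
    rw [← ENNReal.ofReal_natCast]
    exact ENNReal.ofReal_le_ofReal hQcard
  obtain ⟨a, ha⟩ : ∃ a : ℝ, a = (3*Λ*C₀^2*(12*s/ρ)^d) * ((3*s/ρ) * (13*ρ)^n * (s/4)^n) :=
    ⟨_, rfl⟩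
  have htot : volume (⋃ q ∈ Q, BadSet n X₁ X₂ q s ρ) ≤ ENNReal.ofReal a * V * V := by
    calc volume (⋃ q ∈ Q, BadSet n X₁ X₂ q s ρ)
        ≤ ∑ q ∈ Q, volume (BadSet n X₁ X₂ q s ρ) := measure_biUnion_finset_le _ _
    _ ≤ ∑ q ∈ Q, ((⌈s/ρ⌉₊ + 1 : ℕ) : ℝ≥0∞) * (ENNReal.ofReal ((13*ρ)^n) * V) *
          (ENNReal.ofReal ((s/4)^n) * V) := Finset.sum_le_sum hBad
    _ = (Q.card : ℝ≥0∞) * (((⌈s/ρ⌉₊ + 1 : ℕ) : ℝ≥0∞) * (ENNReal.ofReal ((13*ρ)^n) * V) *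
          (ENNReal.ofReal ((s/4)^n) * V)) := by
        rw [Finset.sum_const, nsmul_eq_mul]
    _ ≤ ENNReal.ofReal (3*Λ*C₀^2*(12*s/ρ)^d) * (ENNReal.ofReal (3*s/ρ) *
          (ENNReal.ofReal ((13*ρ)^n) * V) * (ENNReal.ofReal ((s/4)^n) * V)) := by
        gcongr
    _ = ENNReal.ofReal a * V * V := by
        have h4 : ENNReal.ofReal a =
            ENNReal.ofReal (3*Λ*C₀^2*(12*s/ρ)^d) * ENNReal.ofReal (3*s/ρ) *
            ENNReal.ofReal ((13*ρ)^n) * ENNReal.ofReal ((s/4)^n) := by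
          rw [← ENNReal.ofReal_mul (by positivity), ← ENNReal.ofReal_mul (by positivity),
            ← ENNReal.ofReal_mul (by positivity), ha]
          congr 1
          ring
        rw [h4]
        ring
  have hkey : a = (K₂ * ε^β * 4^n) * ((s/4)^n * (s/4)^n) * (L^β * Λ) := by
    rw [ha, hρdef, hK₂, hnβ]
    have hsne : s ≠ 0 := ne_of_gt hs
    have hεne : ε ≠ 0 := ne_of_gt hε0
    have hLne : L ≠ 0 := ne_of_gt hL0
    field_simp
    have e1 : ε^d * ε⁻¹^d = 1 := by rw [← mul_pow, mul_inv_cancel₀ hεne, one_pow]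
    have e2 : L^d * L⁻¹^d = 1 := by rw [← mul_pow, mul_inv_cancel₀ hLne, one_pow]
    have e3 : (1/4:ℝ)^d * 4^d = 1 := by rw [← mul_pow]; norm_num
    have e4 : (1/4:ℝ)^β * 4^β = 1 := by rw [← mul_pow]; norm_num
    linear_combination (ε * ε^β * L * L^β * s * s^d * s^β * 12^d * 13^d * 13^β * 117 * (L^d * L⁻¹^d)) * e1
      + (ε * ε^β * L * L^β * s * s^d * s^β * 12^d * 13^d * 13^β * 117) * e2
      - (ε * ε^β * L * L^β * s * s^d * s^β * 12^d * 13^d * 13^β * 117 * ((1/4:ℝ)^β * 4^β)) * e3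
      - (ε * ε^β * L * L^β * s * s^d * s^β * 12^d * 13^d * 13^β * 117) * e4
  have hεβ : K₂ * ε^β * 4^n < 1 := by
    have h1 : ε^β ≤ ε := by
      calc ε^β ≤ ε^1 := pow_le_pow_of_le_one hε0.le (by linarith) hβ1
      _ = ε := pow_one ε
    have h2 : (0:ℝ) < 4^n := by positivity
    have h3 : K₂ * ε * 4^n ≤ 1/2 := by
      have := mul_le_mul_of_nonneg_left hεK (le_of_lt (by positivity : (0:ℝ) < K₂ * 4^n))
      calc K₂ * ε * 4^n = (K₂ * 4^n) * ε := by ring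
      _ ≤ (K₂ * 4^n) * (1/(2*4^n*K₂)) := mul_le_mul_of_nonneg_left hεK (by positivity)
      _ = 1/2 := by field_simp
    calc K₂ * ε^β * 4^n ≤ K₂ * ε * 4^n := by
          apply mul_le_mul_of_nonneg_right _ h2.le
          exact mul_le_mul_of_nonneg_left h1 hK₂pos.le
    _ ≤ 1/2 := h3
    _ < 1 := by norm_num
  have halt : a < (s/4)^n * (s/4)^n := by
    rw [hkey, hLβ, mul_one]
    have hσ : (0:ℝ) < (s/4)^n * (s/4)^n := by positivity
    calc (K₂ * ε^β * 4^n) * ((s/4)^n * (s/4)^n) < 1 * ((s/4)^n * (s/4)^n) :=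
          mul_lt_mul_of_pos_right hεβ hσ
    _ = (s/4)^n * (s/4)^n := one_mul _
  have hprodvol : volume (closedBall X₁ (s/4) ×ˢ closedBall X₂ (s/4)) =
      (ENNReal.ofReal ((s/4)^n) * V) * (ENNReal.ofReal ((s/4)^n) * V) := by
    rw [MeasureTheory.Measure.volume_eq_prod, Measure.prod_prod]
    rw [Measure.addHaar_closedBall volume X₁ (by positivity),
      Measure.addHaar_closedBall volume X₂ (by positivity), finrank_euclideanSpace_fin]
  have hstrict : volume (⋃ q ∈ Q, BadSet n X₁ X₂ q s ρ) <
      volume (closedBall X₁ (s/4) ×ˢ closedBall X₂ (s/4)) := by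
    apply lt_of_le_of_lt htot
    rw [hprodvol]
    have h1 : ENNReal.ofReal a < ENNReal.ofReal ((s/4)^n * (s/4)^n) :=
      (ENNReal.ofReal_lt_ofReal_iff (by positivity)).mpr halt
    calc ENNReal.ofReal a * V * V < ENNReal.ofReal ((s/4)^n * (s/4)^n) * V * V := by
          rw [mul_assoc, mul_assoc]
          exact ENNReal.mul_lt_mul_left (mul_ne_zero (ne_of_gt hVpos) (ne_of_gt hVpos))
            (ENNReal.mul_ne_top hVtop hVtop) h1
    _ = (ENNReal.ofReal ((s/4)^n) * V) * (ENNReal.ofReal ((s/4)^n) * V) := by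
          rw [ENNReal.ofReal_mul (by positivity)]
          ring
  have hnonempty : ((closedBall X₁ (s/4) ×ˢ closedBall X₂ (s/4)) \
      ⋃ q ∈ Q, BadSet n X₁ X₂ q s ρ).Nonempty := by
    by_contra h
    rw [Set.not_nonempty_iff_eq_empty, Set.diff_eq_empty] at h
    exact absurd (measure_mono h) (not_le.mpr hstrict)
  obtain ⟨⟨Y₁, Y₂⟩, hYmem, hgood⟩ := hnonempty
  obtain ⟨hY₁, hY₂⟩ := hYmem
  simp only [Set.mem_iUnion, exists_prop, not_exists, not_and] at hgood
  have hs24 : s/4 < s/2 := by linarith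
  refine ⟨Y₁, closedBall_subset_ball hs24 hY₁, Y₂, closedBall_subset_ball hs24 hY₂, ?_⟩
  intro Y hY
  obtain ⟨a', b', ha', hb', hab', rfl⟩ := hY
  -- main claim : infDist of segment points ≥ ρ
  have hmain : ρ ≤ infDist (a' • Y₁ + b' • Y₂) Γ := by
    by_contra hlt
    push_neg at hlt
    obtain ⟨q', hq'Γ, hq'd⟩ := (infDist_lt_iff hne).mp hlt
    have hb'1 : b' ≤ 1 := by linarith
    have hW : dist (a' • Y₁ + b' • Y₂) (X₁ + b' • (X₂ - X₁)) ≤ s/4 := by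
      have he : X₁ + b' • (X₂ - X₁) = a' • X₁ + b' • X₂ := by
        rw [show a' = 1 - b' from by linarith]; module
      rw [he, dist_eq_norm]
      have he2 : (a' • Y₁ + b' • Y₂) - (a' • X₁ + b' • X₂)
          = a' • (Y₁ - X₁) + b' • (Y₂ - X₂) := by module
      rw [he2]
      calc ‖a' • (Y₁ - X₁) + b' • (Y₂ - X₂)‖ ≤ ‖a' • (Y₁ - X₁)‖ + ‖b' • (Y₂ - X₂)‖ :=
            norm_add_le _ _
      _ = a' * ‖Y₁ - X₁‖ + b' * ‖Y₂ - X₂‖ := by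
            rw [norm_smul, norm_smul, Real.norm_eq_abs, Real.norm_eq_abs,
              abs_of_nonneg ha', abs_of_nonneg hb']
      _ ≤ a' * (s/4) + b' * (s/4) := by
            have h1 : ‖Y₁ - X₁‖ ≤ s/4 := by
              rw [← dist_eq_norm]; exact mem_closedBall.mp hY₁
            have h2 : ‖Y₂ - X₂‖ ≤ s/4 := by
              rw [← dist_eq_norm]; exact mem_closedBall.mp hY₂
            exact add_le_add (mul_le_mul_of_nonneg_left h1 ha')
              (mul_le_mul_of_nonneg_left h2 hb')
      _ = s/4 := by rw [← add_mul, hab', one_mul]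
    have hq'seg : dist q' (X₁ + b' • (X₂ - X₁)) ≤ s/2 := by
      calc dist q' (X₁ + b' • (X₂ - X₁)) ≤ dist q' (a' • Y₁ + b' • Y₂) +
            dist (a' • Y₁ + b' • Y₂) (X₁ + b' • (X₂ - X₁)) := dist_triangle _ _ _
      _ ≤ ρ + s/4 := by
            rw [dist_comm q']
            exact add_le_add (le_of_lt hq'd) hW
      _ ≤ s/2 := by linarith
    obtain ⟨q, hqQ, hqd⟩ := hQcov q' hq'Γ b' ⟨hb', hb'1⟩ hq'seg
    apply hgood q hqQ
    refine ⟨hY₁, hY₂, b', ⟨hb', hb'1⟩, ?_⟩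
    rw [mem_closedBall]
    have he3 : (1-b') • Y₁ + b' • Y₂ = a' • Y₁ + b' • Y₂ := by
      rw [show a' = 1 - b' from by linarith]
    rw [he3]
    calc dist (a' • Y₁ + b' • Y₂) q ≤ dist (a' • Y₁ + b' • Y₂) q' + dist q' q :=
          dist_triangle _ _ _
    _ ≤ ρ + ρ := add_le_add (le_of_lt hq'd) (le_of_lt hqd)
    _ = 2*ρ := by ring
  -- conclude
  have hexp : Λ ^ (-(d : ℝ) / ((n:ℝ) - 1 - (d:ℝ))) ≤ L := by
    rw [hcast, hL]
    apply Real.rpow_le_rpow_of_exponent_le hΛ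
    rw [neg_div, neg_div, neg_le_neg_iff]
    have h1d : (1:ℝ) ≤ (d:ℝ) := by exact_mod_cast hd
    gcongr
  calc ε * Λ ^ (-(d : ℝ) / ((n:ℝ) - 1 - (d:ℝ))) * s ≤ ε * L * s := by
        apply mul_le_mul_of_nonneg_right _ hs.le
        exact mul_le_mul_of_nonneg_left hexp hε0.le
  _ = ρ := by rw [hρdef]
  _ ≤ infDist (a' • Y₁ + b' • Y₂) Γ := hmain
end
end

section
/- Let n, d be integers with 1 ≤ d < n−1 and Γ ⊂ ℝⁿ a closed d-Ahlfors regular set with constant C₀. There exists C > 0, depending only on n, d, C₀, such that for every q ∈ Γ and r > 0, C⁻¹ r^{d+1} ≤ ∫_{B(q,r)} δ(Y)^{d−n+1} dY ≤ C r^{d+1}, where the integral is with respect to Lebesgue measure (note that Γ has Lebesgue measure zero so the domain of integration may equivalently be taken to be B(q,r) ∖ Γ). -/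
open MeasureTheory Metric Set
open scoped ENNReal NNReal Topology

noncomputable section

lemma vol_inter_zero (n d : ℕ) (C₀ : ℝ) (hdn : d + 1 < n) (Γ : Set (Pt n))
    (hAR : AhlforsRegular n d C₀ Γ) (q : Pt n) (hq : q ∈ Γ) (r : ℝ) (hr : 0 < r) :
    volume (ball q r ∩ Γ) = 0 := by
  have hac : (volume : Measure (Pt n)) ≪ μH[((n : ℝ≥0) : ℝ)] := by
    have h := MeasureTheory.Measure.absolutelyContinuous_isAddHaarMeasure
      (volume : Measure (Pt n)) μH[(Module.finrank ℝ (Pt n) : ℝ)]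
    have hn : ((Module.finrank ℝ (Pt n) : ℝ)) = ((n : ℝ≥0) : ℝ) := by
      rw [finrank_euclideanSpace_fin]; norm_num
    rwa [hn] at h
  refine measure_zero_of_dimH_lt hac ?_
  have h1 : dimH (ball q r ∩ Γ) ≤ (d : ℝ≥0) := by
    apply dimH_le_of_hausdorffMeasure_ne_top
    have h2 := (hAR q hq r hr).2
    have : ((d : ℝ≥0) : ℝ) = (d : ℝ) := by norm_num
    rw [this]
    exact (h2.trans_lt ENNReal.ofReal_lt_top).ne
  refine h1.trans_lt ?_
  rw [ENNReal.coe_lt_coe]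
  exact_mod_cast (by omega : d < n)

lemma key_vol (n d : ℕ) (C₀ : ℝ) (hC₀ : 1 ≤ C₀) (hdn : d + 1 < n)
    (Γ : Set (Pt n)) (hΓc : IsClosed Γ) (hΓne : Γ.Nonempty) (hAR : AhlforsRegular n d C₀ Γ)
    (q : Pt n) (hq : q ∈ Γ) {r t : ℝ} (hr : 0 < r) (ht : 0 < t) (htr : t ≤ r) :
    volume {Y | Y ∈ ball q r ∧ infDist Y Γ ≤ t} ≤
      ENNReal.ofReal ((C₀ ^ 2 * 3 ^ n * 5 ^ d * (volume (ball (0 : Pt n) 1)).toReal) *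
        (t ^ (n - d) * r ^ d)) := by
  have hC₀pos : (0:ℝ) < C₀ := lt_of_lt_of_le one_pos hC₀
  set b : ℝ := (volume (ball (0 : Pt n) 1)).toReal with hb
  set A : Set (Pt n) := {Y | Y ∈ ball q r ∧ infDist Y Γ ≤ t} with hA
  have hAmeas : MeasurableSet A := by
    have h1 : MeasurableSet {Y : Pt n | infDist Y Γ ≤ t} :=
      (continuous_infDist_pt Γ).measurable measurableSet_Iic
    exact measurableSet_ball.inter h1
  set σ : Measure (Pt n) := μH[(d : ℝ)].restrict (Γ ∩ ball q (5 * r)) with hσ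
  have hσuniv : σ Set.univ ≤ ENNReal.ofReal (C₀ * (5 * r) ^ d) := by
    rw [Measure.restrict_apply_univ, Set.inter_comm]
    exact (hAR q hq (5 * r) (by linarith)).2
  haveI : IsFiniteMeasure σ := ⟨hσuniv.trans_lt ENNReal.ofReal_lt_top⟩
  set S : Set (Pt n × Pt n) := {p | dist p.1 p.2 < 3 * t} with hSdef
  have hSopen : IsOpen S := isOpen_Iio.preimage continuous_dist
  have hS : MeasurableSet S := hSopen.measurableSet
  set g : Pt n → Pt n → ℝ≥0∞ := fun Y x => S.indicator (fun _ => 1) (Y, x) with hgdef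
  have hg_meas : Measurable (Function.uncurry g) := by
    have : Function.uncurry g = S.indicator (fun _ => (1:ℝ≥0∞)) := rfl
    rw [this]
    exact measurable_const.indicator hS
  -- step 1
  have step1 : ∀ Y ∈ A, ENNReal.ofReal (C₀⁻¹ * t ^ d) ≤ ∫⁻ x, g Y x ∂σ := by
    intro Y hY
    obtain ⟨z, hzΓ, hz⟩ := hΓc.exists_infDist_eq_dist hΓne Y
    have hzd : dist Y z ≤ t := hz ▸ hY.2
    have hgY : (fun x => g Y x) = (ball Y (3 * t)).indicator (fun _ => (1:ℝ≥0∞)) := by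
      classical
      funext x
      rw [show g Y x = S.indicator (fun _ => (1:ℝ≥0∞)) (Y, x) from rfl,
        Set.indicator_apply, Set.indicator_apply]
      congr 1
      all_goals simp [hSdef, mem_ball, dist_comm]
    rw [hgY, lintegral_indicator measurableSet_ball]
    simp only [lintegral_const, Measure.restrict_apply MeasurableSet.univ, Set.univ_inter, one_mul]
    have hsub : ball z t ∩ Γ ⊆ ball Y (3 * t) ∩ (Γ ∩ ball q (5 * r)) := by
      rintro w ⟨hw1, hw2⟩
      have hwz : dist w z < t := mem_ball.1 hw1
      have hYq : dist Y q < r := mem_ball.1 hY.1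
      constructor
      · rw [mem_ball]
        have : dist w Y ≤ dist w z + dist z Y := dist_triangle w z Y
        rw [dist_comm z Y] at this
        nlinarith [hzd, hwz, this]
      · refine ⟨hw2, ?_⟩
        rw [mem_ball]
        have h1 : dist w q ≤ dist w z + dist z q := dist_triangle w z q
        have h2 : dist z q ≤ dist z Y + dist Y q := dist_triangle z Y q
        rw [dist_comm z Y] at h2
        nlinarith
    calc ENNReal.ofReal (C₀⁻¹ * t ^ d) ≤ μH[(d : ℝ)] (ball z t ∩ Γ) := (hAR z hzΓ t ht).1
      _ ≤ μH[(d : ℝ)] (ball Y (3 * t) ∩ (Γ ∩ ball q (5 * r))) := measure_mono hsub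
      _ = σ (ball Y (3 * t)) := (Measure.restrict_apply measurableSet_ball).symm
  -- step 2
  have step2 : ENNReal.ofReal (C₀⁻¹ * t ^ d) * volume A ≤
      ∫⁻ Y in A, (∫⁻ x, g Y x ∂σ) ∂volume := by
    rw [← setLIntegral_const A (ENNReal.ofReal (C₀⁻¹ * t ^ d))]
    exact setLIntegral_mono' hAmeas step1
  -- swap
  have step3 : ∫⁻ Y in A, (∫⁻ x, g Y x ∂σ) ∂volume = ∫⁻ x, ∫⁻ Y in A, g Y x ∂volume ∂σ :=
    lintegral_lintegral_swap hg_meas.aemeasurable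
  -- step 4
  have step4 : ∀ x : Pt n, (∫⁻ Y in A, g Y x ∂volume) ≤ ENNReal.ofReal ((3 * t) ^ n * b) := by
    intro x
    have hgx : (fun Y => g Y x) = (ball x (3 * t)).indicator (fun _ => (1:ℝ≥0∞)) := by
      classical
      funext Y
      rw [show g Y x = S.indicator (fun _ => (1:ℝ≥0∞)) (Y, x) from rfl,
        Set.indicator_apply, Set.indicator_apply]
      congr 1
      all_goals simp [hSdef, mem_ball, dist_comm]
    calc (∫⁻ Y in A, g Y x ∂volume) ≤ ∫⁻ Y, g Y x ∂volume := setLIntegral_le_lintegral A _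
      _ = volume (ball x (3 * t)) := by
          rw [hgx, lintegral_indicator measurableSet_ball]
          simp
      _ = ENNReal.ofReal ((3 * t) ^ n) * volume (ball (0 : Pt n) 1) := by
          rw [Measure.addHaar_ball_of_pos volume x (by linarith : (0:ℝ) < 3 * t)]
          congr 2
          rw [finrank_euclideanSpace_fin]
      _ = ENNReal.ofReal ((3 * t) ^ n * b) := by
          rw [ENNReal.ofReal_mul (by positivity), ENNReal.ofReal_toReal measure_ball_lt_top.ne]
  have step5 : (∫⁻ x, ∫⁻ Y in A, g Y x ∂volume ∂σ) ≤
      ENNReal.ofReal ((3 * t) ^ n * b * (C₀ * (5 * r) ^ d)) := by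
    calc (∫⁻ x, ∫⁻ Y in A, g Y x ∂volume ∂σ)
        ≤ ∫⁻ _, ENNReal.ofReal ((3 * t) ^ n * b) ∂σ := lintegral_mono step4
      _ = ENNReal.ofReal ((3 * t) ^ n * b) * σ Set.univ := lintegral_const _
      _ ≤ ENNReal.ofReal ((3 * t) ^ n * b) * ENNReal.ofReal (C₀ * (5 * r) ^ d) :=
          mul_le_mul_right hσuniv _
      _ = ENNReal.ofReal ((3 * t) ^ n * b * (C₀ * (5 * r) ^ d)) := by
          rw [← ENNReal.ofReal_mul (by positivity)]
  -- combine
  have hkey : ENNReal.ofReal (C₀⁻¹ * t ^ d) * volume A ≤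
      ENNReal.ofReal (C₀⁻¹ * t ^ d) *
        ENNReal.ofReal ((C₀ ^ 2 * 3 ^ n * 5 ^ d * b) * (t ^ (n - d) * r ^ d)) := by
    have hident : (C₀⁻¹ * t ^ d) * ((C₀ ^ 2 * 3 ^ n * 5 ^ d * b) * (t ^ (n - d) * r ^ d))
        = (3 * t) ^ n * b * (C₀ * (5 * r) ^ d) := by
      rw [mul_pow, mul_pow, show t ^ n = t ^ d * t ^ (n - d) by
        rw [← pow_add]; congr 1; omega]
      field_simp
    rw [← ENNReal.ofReal_mul (by positivity), hident]
    exact step2.trans (step3 ▸ step5)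
  have h0' : ENNReal.ofReal (C₀⁻¹ * t ^ d) ≠ 0 := by
    simp only [Ne, ENNReal.ofReal_eq_zero, not_le]
    positivity
  exact (ENNReal.mul_le_mul_iff_right h0' ENNReal.ofReal_ne_top).1 hkey

/-- Estimate on the weight at the boundary (Lemma 2.3 (ii) of David–Feneuil–Mayboroda):
for `q ∈ Γ` and `r > 0`,
`m(B(q,r)) = ∫_{B(q,r)} δ(Y)^{d-n+1} dY ≈ r^{d+1}`. -/
theorem weight_estimate_boundary (n d : ℕ) (C₀ : ℝ)
    (hd : 1 ≤ d) (hdn : d + 1 < n) (hC₀ : 1 ≤ C₀) :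
    ∃ C : ℝ, 0 < C ∧
      ∀ Γ : Set (Pt n), IsClosed Γ → Γ.Nonempty → AhlforsRegular n d C₀ Γ →
        ∀ q ∈ Γ, ∀ r : ℝ, 0 < r →
          ENNReal.ofReal (C⁻¹ * r ^ (d + 1)) ≤
              (∫⁻ Y in ball q r, ENNReal.ofReal (infDist Y Γ ^ ((d : ℝ) - n + 1))) ∧
            (∫⁻ Y in ball q r, ENNReal.ofReal (infDist Y Γ ^ ((d : ℝ) - n + 1))) ≤
              ENNReal.ofReal (C * r ^ (d + 1)) := by
  classical
  have hC₀pos : (0:ℝ) < C₀ := lt_of_lt_of_le one_pos hC₀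
  set b : ℝ := (volume (ball (0 : Pt n) 1)).toReal with hbdef
  have hbpos : 0 < b :=
    ENNReal.toReal_pos (measure_ball_pos volume 0 one_pos).ne' measure_ball_lt_top.ne
  set K₀ : ℝ := C₀ ^ 2 * 3 ^ n * 5 ^ d * b with hK₀def
  have hK₀pos : 0 < K₀ := by positivity
  refine ⟨b⁻¹ + K₀ * 2 ^ n + 1, by positivity, ?_⟩
  set C : ℝ := b⁻¹ + K₀ * 2 ^ n + 1 with hCdef
  intro Γ hΓc hΓne hAR q hq r hr
  set α : ℝ := (d : ℝ) - n + 1 with hαdef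
  have hdn' : (d : ℝ) + 1 < (n : ℝ) := by exact_mod_cast hdn
  have hαneg : α < 0 := by rw [hαdef]; linarith
  have hαne : α ≠ 0 := ne_of_lt hαneg
  have hf_meas : Measurable fun Y : Pt n => ENNReal.ofReal (infDist Y Γ ^ α) :=
    ((continuous_infDist_pt Γ).measurable.pow_const α).ennreal_ofReal
  have hvol0 : volume (ball q r ∩ Γ) = 0 := vol_inter_zero n d C₀ hdn Γ hAR q hq r hr
  constructor
  · -- lower bound
    have hsub : (∫⁻ Y in ball q r \ Γ, ENNReal.ofReal (infDist Y Γ ^ α)) ≤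
        ∫⁻ Y in ball q r, ENNReal.ofReal (infDist Y Γ ^ α) :=
      lintegral_mono_set diff_subset
    refine le_trans ?_ hsub
    have hpt : ∀ Y ∈ ball q r \ Γ,
        ENNReal.ofReal (r ^ α) ≤ ENNReal.ofReal (infDist Y Γ ^ α) := by
      intro Y hY
      have hδpos : 0 < infDist Y Γ := by
        rw [← IsClosed.notMem_iff_infDist_pos hΓc hΓne]; exact hY.2
      have hδle : infDist Y Γ ≤ r :=
        le_trans (infDist_le_dist_of_mem hq) (le_of_lt (mem_ball.1 hY.1))
      exact ENNReal.ofReal_le_ofReal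
        (Real.rpow_le_rpow_of_nonpos hδpos hδle (le_of_lt hαneg))
    have hsetmeas : MeasurableSet (ball q r \ Γ) :=
      measurableSet_ball.diff hΓc.measurableSet
    have h1 : ENNReal.ofReal (r ^ α) * volume (ball q r \ Γ) ≤
        ∫⁻ Y in ball q r \ Γ, ENNReal.ofReal (infDist Y Γ ^ α) := by
      rw [← setLIntegral_const (ball q r \ Γ) (ENNReal.ofReal (r ^ α))]
      exact setLIntegral_mono' hsetmeas hpt
    refine le_trans ?_ h1
    have hvol : volume (ball q r \ Γ) = ENNReal.ofReal (r ^ n * b) := by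
      have : ball q r \ Γ = ball q r \ (ball q r ∩ Γ) := by
        ext Y; simp only [mem_diff, mem_inter_iff]; tauto
      rw [this, measure_diff_null hvol0,
        Measure.addHaar_ball_of_pos volume q hr, finrank_euclideanSpace_fin,
        ENNReal.ofReal_mul (by positivity), ENNReal.ofReal_toReal measure_ball_lt_top.ne]
    rw [hvol, ← ENNReal.ofReal_mul (by positivity)]
    apply ENNReal.ofReal_le_ofReal
    have hrpow : r ^ α * r ^ (n : ℕ) = r ^ (d + 1 : ℕ) := by
      rw [← Real.rpow_natCast r n, ← Real.rpow_natCast r (d + 1), ← Real.rpow_add hr]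
      congr 1
      push_cast [hαdef]
      ring
    calc C⁻¹ * r ^ (d + 1) ≤ b * r ^ (d + 1) := by
          apply mul_le_mul_of_nonneg_right _ (by positivity)
          have h2 : b⁻¹ ≤ C := by
            have h3 : 0 < K₀ * 2 ^ n := by positivity
            rw [hCdef]; linarith
          calc C⁻¹ ≤ (b⁻¹)⁻¹ := by
                apply inv_anti₀ (by positivity) h2
            _ = b := inv_inv b
      _ = r ^ α * (r ^ (n:ℕ) * b) := by rw [← mul_assoc, hrpow]; ring
  · -- upper bound
    have hsplit : ball q r = (ball q r ∩ Γ) ∪ (ball q r \ Γ) := (inter_union_diff _ _).symm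
    have hzero : (∫⁻ Y in ball q r ∩ Γ, ENNReal.ofReal (infDist Y Γ ^ α)) = 0 := by
      have : ∀ Y ∈ ball q r ∩ Γ, ENNReal.ofReal (infDist Y Γ ^ α) ≤ 0 := by
        intro Y hY
        rw [infDist_zero_of_mem hY.2, Real.zero_rpow hαne]
        simp
      have h := setLIntegral_mono' (μ := volume)
        (measurableSet_ball.inter hΓc.measurableSet) this
      simpa using h
    -- dyadic decomposition
    set A : ℕ → Set (Pt n) := fun k =>
      {Y | Y ∈ ball q r ∧ r / 2 ^ (k + 1) < infDist Y Γ ∧ infDist Y Γ ≤ r / 2 ^ k} with hAdef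
    have hcover : ball q r \ Γ ⊆ ⋃ k, A k := by
      intro Y hY
      have hδpos : 0 < infDist Y Γ := by
        rw [← IsClosed.notMem_iff_infDist_pos hΓc hΓne]; exact hY.2
      have hδlt : infDist Y Γ < r :=
        lt_of_le_of_lt (infDist_le_dist_of_mem hq) (mem_ball.1 hY.1)
      set δ := infDist Y Γ
      have hex : ∃ k : ℕ, r / 2 ^ (k + 1) < δ := by
        obtain ⟨m, hm⟩ := pow_unbounded_of_one_lt (r / δ) (one_lt_two : (1:ℝ) < 2)
        refine ⟨m, ?_⟩
        rw [div_lt_iff₀ (by positivity)] at hm ⊢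
        calc r < 2 ^ m * δ := hm
          _ ≤ δ * 2 ^ (m + 1) := by
              rw [mul_comm]
              apply mul_le_mul_of_nonneg_left _ (le_of_lt hδpos)
              exact pow_le_pow_right₀ (by norm_num) (Nat.le_succ m)
      have hk1 : r / 2 ^ (Nat.find hex + 1) < δ := Nat.find_spec hex
      have hk2 : δ ≤ r / 2 ^ (Nat.find hex) := by
        rcases Nat.eq_zero_or_pos (Nat.find hex) with h0 | hpos
        · rw [h0]; simpa using le_of_lt hδlt
        · have hlt : Nat.find hex - 1 < Nat.find hex := by omega
          have hmin := Nat.find_min hex hlt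
          have heq : (Nat.find hex - 1) + 1 = Nat.find hex := by omega
          rw [heq] at hmin
          exact not_lt.1 hmin
      exact mem_iUnion.2 ⟨Nat.find hex, hY.1, hk1, hk2⟩
    have hAmeas : ∀ k, MeasurableSet (A k) := by
      intro k
      have h1 : MeasurableSet {Y : Pt n | r / 2 ^ (k + 1) < infDist Y Γ} :=
        (continuous_infDist_pt Γ).measurable measurableSet_Ioi
      have h2 : MeasurableSet {Y : Pt n | infDist Y Γ ≤ r / 2 ^ k} :=
        (continuous_infDist_pt Γ).measurable measurableSet_Iic
      exact measurableSet_ball.inter (h1.inter h2)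
    -- per-k estimate
    have hperk : ∀ k : ℕ, (∫⁻ Y in A k, ENNReal.ofReal (infDist Y Γ ^ α)) ≤
        ENNReal.ofReal (K₀ * 2 ^ (n - d) * r ^ (d + 1)) * (2⁻¹ : ℝ≥0∞) ^ (k + 1) := by
      intro k
      set s : ℝ := r / 2 ^ (k + 1) with hsdef
      have hspos : 0 < s := by positivity
      have htk : (0:ℝ) < r / 2 ^ k := by positivity
      have htkr : r / 2 ^ k ≤ r := by
        apply div_le_self (le_of_lt hr)
        exact one_le_pow₀ (by norm_num : (1:ℝ) ≤ 2)
      have hptk : ∀ Y ∈ A k, ENNReal.ofReal (infDist Y Γ ^ α) ≤ ENNReal.ofReal (s ^ α) := by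
        intro Y hY
        exact ENNReal.ofReal_le_ofReal
          (Real.rpow_le_rpow_of_nonpos hspos (le_of_lt hY.2.1) (le_of_lt hαneg))
      have hAk : volume (A k) ≤ ENNReal.ofReal (K₀ * ((r / 2 ^ k) ^ (n - d) * r ^ d)) := by
        have hsub2 : A k ⊆ {Y | Y ∈ ball q r ∧ infDist Y Γ ≤ r / 2 ^ k} :=
          fun Y hY => ⟨hY.1, hY.2.2⟩
        exact (measure_mono hsub2).trans
          (key_vol n d C₀ hC₀ hdn Γ hΓc hΓne hAR q hq hr htk htkr)
      calc (∫⁻ Y in A k, ENNReal.ofReal (infDist Y Γ ^ α))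
          ≤ ∫⁻ _ in A k, ENNReal.ofReal (s ^ α) := setLIntegral_mono' (hAmeas k) hptk
        _ = ENNReal.ofReal (s ^ α) * volume (A k) := setLIntegral_const _ _
        _ ≤ ENNReal.ofReal (s ^ α) * ENNReal.ofReal (K₀ * ((r / 2 ^ k) ^ (n - d) * r ^ d)) :=
            mul_le_mul_right hAk _
        _ = ENNReal.ofReal (s ^ α * (K₀ * ((r / 2 ^ k) ^ (n - d) * r ^ d))) := by
            rw [← ENNReal.ofReal_mul (Real.rpow_nonneg (le_of_lt hspos) α)]
        _ = ENNReal.ofReal ((K₀ * 2 ^ (n - d) * r ^ (d + 1)) * (1 / 2 : ℝ) ^ (k + 1)) := by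
            congr 1
            have h2s : r / 2 ^ k = 2 * s := by
              rw [hsdef]; field_simp; ring
            have hssucc : s ^ α * s ^ ((n - d : ℕ) : ℝ) = s := by
              rw [← Real.rpow_add hspos]
              have : α + ((n - d : ℕ) : ℝ) = 1 := by
                rw [hαdef, Nat.cast_sub (by omega : d ≤ n)]; ring
              rw [this, Real.rpow_one]
            have hsnd : s ^ (n - d : ℕ) = s ^ ((n - d : ℕ) : ℝ) :=
              (Real.rpow_natCast s (n - d)).symm
            have hs1 : s = r * (1 / 2 : ℝ) ^ (k + 1) := by
              rw [hsdef]; field_simp; rw [← mul_pow]; norm_num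
            rw [h2s, mul_pow, mul_comm (s ^ α)]
            calc K₀ * (2 ^ (n - d) * s ^ (n - d) * r ^ d) * s ^ α
                = K₀ * 2 ^ (n - d) * r ^ d * (s ^ α * s ^ (n - d : ℕ)) := by ring
              _ = K₀ * 2 ^ (n - d) * r ^ d * s := by rw [hsnd, hssucc]
              _ = K₀ * 2 ^ (n - d) * r ^ (d + 1) * (1 / 2 : ℝ) ^ (k + 1) := by
                  rw [hs1, pow_succ r d]; ring
        _ = ENNReal.ofReal (K₀ * 2 ^ (n - d) * r ^ (d + 1)) * (2⁻¹ : ℝ≥0∞) ^ (k + 1) := by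
            rw [ENNReal.ofReal_mul (by positivity), ENNReal.ofReal_pow (by norm_num)]
            congr 2
            rw [ENNReal.ofReal_div_of_pos (by norm_num), ENNReal.ofReal_one,
              ENNReal.ofReal_ofNat, one_div]
    -- sum up
    have hsum : (∑' k : ℕ, (ENNReal.ofReal (K₀ * 2 ^ (n - d) * r ^ (d + 1)) *
        (2⁻¹ : ℝ≥0∞) ^ (k + 1))) = ENNReal.ofReal (K₀ * 2 ^ (n - d) * r ^ (d + 1)) := by
      rw [ENNReal.tsum_mul_left]
      have : (∑' k : ℕ, (2⁻¹ : ℝ≥0∞) ^ (k + 1)) = 1 := by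
        simp_rw [pow_succ]
        rw [ENNReal.tsum_mul_right, ENNReal.tsum_geometric, ENNReal.one_sub_inv_two, inv_inv]
        exact ENNReal.mul_inv_cancel (by norm_num) (by norm_num)
      rw [this, mul_one]
    calc (∫⁻ Y in ball q r, ENNReal.ofReal (infDist Y Γ ^ α))
        ≤ (∫⁻ Y in ball q r ∩ Γ, ENNReal.ofReal (infDist Y Γ ^ α)) +
            ∫⁻ Y in ball q r \ Γ, ENNReal.ofReal (infDist Y Γ ^ α) := by
          conv_lhs => rw [hsplit]
          exact lintegral_union_le _ _ _
      _ = ∫⁻ Y in ball q r \ Γ, ENNReal.ofReal (infDist Y Γ ^ α) := by rw [hzero, zero_add]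
      _ ≤ ∫⁻ Y in ⋃ k, A k, ENNReal.ofReal (infDist Y Γ ^ α) := lintegral_mono_set hcover
      _ ≤ ∑' k : ℕ, ∫⁻ Y in A k, ENNReal.ofReal (infDist Y Γ ^ α) := lintegral_iUnion_le _ _
      _ ≤ ∑' k : ℕ, (ENNReal.ofReal (K₀ * 2 ^ (n - d) * r ^ (d + 1)) *
            (2⁻¹ : ℝ≥0∞) ^ (k + 1)) := ENNReal.tsum_le_tsum hperk
      _ = ENNReal.ofReal (K₀ * 2 ^ (n - d) * r ^ (d + 1)) := hsum
      _ ≤ ENNReal.ofReal (C * r ^ (d + 1)) := by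
          apply ENNReal.ofReal_le_ofReal
          apply mul_le_mul_of_nonneg_right _ (by positivity)
          have h2nd : (2:ℝ) ^ (n - d) ≤ 2 ^ n :=
            pow_le_pow_right₀ (by norm_num) (Nat.sub_le n d)
          have h4 : K₀ * 2 ^ (n - d) ≤ K₀ * 2 ^ n :=
            mul_le_mul_of_nonneg_left h2nd (le_of_lt hK₀pos)
          have h5 : (0:ℝ) < b⁻¹ := by positivity
          rw [hCdef]
          linarith
end
end

section
/- Let n, d be integers with 1 ≤ d ≤ n and Γ ⊂ ℝⁿ a closed d-Ahlfors regular set with constant C₀. Then there exist constants a₀ > 0, A₁ > 0 and γ > 0, depending only on d, n, C₀, such that for each k ∈ ℤ there is a countable collection 𝔻_k = {Q_j^k : j ∈ J_k} of Borel subsets of Γ (dyadic cubes) with the following properties: (i) Γ = ⋃_{j ∈ J_k} Q_j^k for each k ∈ ℤ; (ii) if m ≥ k then for all i, j either Q_i^m ⊆ Q_j^k or Q_i^m ∩ Q_j^k = ∅; (iii) for each pair (j,k) and each m < k there is a unique i ∈ J_m such that Q_j^k ⊆ Q_i^m; (iv) diam Q_j^k ≤ A₁ 2^{−k}; (v) each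 Q_j^k contains a surface ball B(x_j^k, a₀ 2^{−k}) ∩ Γ for some x_j^k ∈ Γ; (vi) H^d({q ∈ Q_j^k : dist(q, Γ ∖ Q_j^k) ≤ ρ 2^{−k}}) ≤ A₁ ρ^{γ} H^d(Q_j^k) for all (j,k) and all ρ ∈ (0, a₀). -/
open MeasureTheory Metric Set
open scoped ENNReal NNReal Topology

noncomputable section

namespace DC

variable {n : ℕ}

/-- `δ`-separated set. -/
def Sep (δ : ℝ) (S : Set (Pt n)) : Prop := ∀ x ∈ S, ∀ y ∈ S, x ≠ y → δ ≤ dist x y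

lemma Sep.countable {δ : ℝ} (hδ : 0 < δ) {S : Set (Pt n)} (h : Sep δ S) : S.Countable := by
  have hpd : S.PairwiseDisjoint (fun x => ball x (δ/2)) := by
    intro x hx y hy hxy
    refine Metric.ball_disjoint_ball ?_
    have := h x hx y hy hxy
    linarith
  exact hpd.countable_of_isOpen (fun x _ => isOpen_ball)
    (fun x _ => ⟨x, mem_ball_self (by linarith)⟩)

lemma Sep.finite_inter_closedBall {δ : ℝ} (hδ : 0 < δ) {S : Set (Pt n)} (h : Sep δ S)
    (x : Pt n) (r : ℝ) : (S ∩ closedBall x r).Finite := by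
  obtain ⟨t, htf, hts⟩ := (totallyBounded_iff.1
    (isCompact_closedBall x r).totallyBounded) (δ/2) (by linarith)
  have : S ∩ closedBall x r ⊆ ⋃ y ∈ t, S ∩ ball y (δ/2) := by
    intro p ⟨hpS, hpB⟩
    obtain ⟨y, hy, hpy⟩ := mem_iUnion₂.1 (hts hpB)
    exact mem_iUnion₂.2 ⟨y, hy, hpS, hpy⟩
  refine Set.Finite.subset (htf.biUnion fun y _ => ?_) this
  refine Set.Subsingleton.finite ?_
  intro a ⟨haS, haB⟩ b ⟨hbS, hbB⟩
  by_contra hab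
  have := h a haS b hbS hab
  have hd : dist a b < δ := by
    rw [mem_ball] at haB hbB
    have htr := dist_triangle a y b
    have hb' : dist y b < δ / 2 := by rw [dist_comm]; exact hbB
    linarith
  linarith

lemma Sep.isClosed {δ : ℝ} (hδ : 0 < δ) {S : Set (Pt n)} (h : Sep δ S) : IsClosed S := by
  rw [← closure_eq_iff_isClosed]
  refine Subset.antisymm ?_ subset_closure
  intro x hx
  obtain ⟨y₁, hy₁S, hy₁⟩ := Metric.mem_closure_iff.1 hx (δ/2) (by linarith)
  rcases eq_or_ne x y₁ with rfl | hne
  · exact hy₁S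
  · have hpos : 0 < dist x y₁ := dist_pos.2 hne
    obtain ⟨y₂, hy₂S, hy₂⟩ := Metric.mem_closure_iff.1 hx (min (dist x y₁) (δ/2))
      (lt_min hpos (by linarith))
    have h₁ : dist x y₂ < dist x y₁ := lt_of_lt_of_le hy₂ (min_le_left _ _)
    have h₂ : dist x y₂ < δ/2 := lt_of_lt_of_le hy₂ (min_le_right _ _)
    have hne' : y₁ ≠ y₂ := fun he => by rw [he] at h₁; exact lt_irrefl _ h₁
    have := h y₁ hy₁S y₂ hy₂S hne'
    have : δ ≤ dist y₁ y₂ := this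
    have htr : dist y₁ y₂ ≤ dist y₁ x + dist x y₂ := dist_triangle _ _ _
    rw [dist_comm y₁ x] at htr
    linarith

lemma exists_net {Γ : Set (Pt n)} (hne : Γ.Nonempty) {δ : ℝ} (hδ : 0 < δ) :
    ∃ N : Set (Pt n), N ⊆ Γ ∧ Sep δ N ∧ (∀ q ∈ Γ, ∃ x ∈ N, dist q x < δ) ∧ N.Nonempty := by
  obtain ⟨q₀, hq₀⟩ := hne
  obtain ⟨N, hsub, hmax⟩ := zorn_subset_nonempty {T | T ⊆ Γ ∧ Sep δ T}
    (fun c hc hchain _ => ⟨⋃₀ c, ⟨fun x hx => by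
        obtain ⟨T, hT, hxT⟩ := hx; exact (hc hT).1 hxT,
      fun x hx y hy hxy => by
        obtain ⟨T, hT, hxT⟩ := hx
        obtain ⟨T', hT', hyT⟩ := hy
        rcases hchain.total hT hT' with hTT | hTT
        · exact (hc hT').2 x (hTT hxT) y hyT hxy
        · exact (hc hT).2 x hxT y (hTT hyT) hxy⟩,
      fun T hT => subset_sUnion_of_mem hT⟩)
    {q₀} ⟨singleton_subset_iff.2 hq₀, fun x hx y hy hxy => by
      rw [mem_singleton_iff] at hx hy; exact absurd (hx.trans hy.symm) hxy⟩
  refine ⟨N, hmax.prop.1, hmax.prop.2, ?_, ⟨q₀, hsub rfl⟩⟩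
  intro q hq
  by_contra hcon
  push_neg at hcon
  have hqN : q ∉ N := fun hqN => by
    have := hcon q hqN
    simp at this
    linarith
  have : insert q N ∈ {T | T ⊆ Γ ∧ Sep δ T} := by
    refine ⟨insert_subset hq hmax.prop.1, ?_⟩
    intro x hx y hy hxy
    rcases hx with rfl | hx
    · rcases hy with rfl | hy
      · exact absurd rfl hxy
      · exact hcon y hy
    · rcases hy with rfl | hy
      · rw [dist_comm]; exact hcon x hx
      · exact hmax.prop.2 x hx y hy hxy
  have := hmax.eq_of_subset this (subset_insert q N)
  exact hqN (this ▸ mem_insert q N)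

/-- the scale of generation `m`. -/
def sc (m : ℤ) : ℝ := (16:ℝ) ^ (-m)

lemma sc_pos (m : ℤ) : 0 < sc m := zpow_pos (by norm_num) _

lemma sc_succ (m : ℤ) : sc (m + 1) = sc m / 16 := by
  unfold sc
  rw [neg_add, zpow_add₀ (by norm_num : (16:ℝ) ≠ 0)]
  norm_num
  ring

lemma sc_add_nat (m : ℤ) (i : ℕ) : sc (m + i) = sc m * (16:ℝ)⁻¹ ^ i := by
  induction i with
  | zero => simp
  | succ i ih =>
      have : (m + (i+1:ℕ) : ℤ) = (m + i) + 1 := by push_cast; ring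
      rw [this, sc_succ, ih, pow_succ]; ring

lemma sc_anti {m m' : ℤ} (h : m ≤ m') : sc m' ≤ sc m :=
  zpow_le_zpow_right₀ (by norm_num : (1:ℝ) ≤ 16) (neg_le_neg h)

/-- A system of nets on `Γ`. -/
structure NetSys (Γ : Set (Pt n)) (N : ℤ → Set (Pt n)) : Prop where
  sub : ∀ m, N m ⊆ Γ
  sep : ∀ m, Sep (sc m) (N m)
  cov : ∀ m, ∀ q ∈ Γ, ∃ x ∈ N m, dist q x < sc m
  nonempty : ∀ m, (N m).Nonempty

variable {Γ : Set (Pt n)} {N : ℤ → Set (Pt n)}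

open Classical in
/-- nearest-point projection to the net `N m`. -/
def fnear (N : ℤ → Set (Pt n)) (m : ℤ) (z : Pt n) : Pt n :=
  if h : ∃ y ∈ N m, infDist z (N m) = dist z y then h.choose else z

section fnear
variable (hNS : NetSys Γ N)
include hNS

lemma fnear_spec (m : ℤ) (z : Pt n) :
    fnear N m z ∈ N m ∧ infDist z (N m) = dist z (fnear N m z) := by
  have h : ∃ y ∈ N m, infDist z (N m) = dist z y :=
    ((hNS.sep m).isClosed (sc_pos m)).exists_infDist_eq_dist (hNS.nonempty m) z
  rw [fnear]
  rw [dif_pos h]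
  exact ⟨h.choose_spec.1, h.choose_spec.2⟩

lemma fnear_mem (m : ℤ) (z : Pt n) : fnear N m z ∈ N m := (fnear_spec hNS m z).1

lemma fnear_capture {m : ℤ} {z x : Pt n} (hx : x ∈ N m) (hd : dist z x < sc m / 2) :
    fnear N m z = x := by
  obtain ⟨hmem, hdist⟩ := fnear_spec hNS m z
  by_contra hne
  have h1 : infDist z (N m) ≤ dist z x := infDist_le_dist_of_mem hx
  have h2 : dist z (fnear N m z) < sc m / 2 := by rw [← hdist]; linarith
  have h3 : sc m ≤ dist (fnear N m z) x := hNS.sep m _ hmem x hx hne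
  have h4 : dist (fnear N m z) x ≤ dist (fnear N m z) z + dist z x := dist_triangle _ _ _
  rw [dist_comm (fnear N m z) z] at h4
  linarith

lemma fnear_covdist {m : ℤ} {z : Pt n} (hz : z ∈ Γ) : dist z (fnear N m z) < sc m := by
  obtain ⟨x, hx, hxd⟩ := hNS.cov m z hz
  have := infDist_le_dist_of_mem (x := z) hx
  rw [(fnear_spec hNS m z).2] at this
  linarith

end fnear

/-- the admissible net points at level `m` for the point `q`. -/
def adm (N : ℤ → Set (Pt n)) (m : ℤ) (q : Pt n) : Set (Pt n) :=
  {z | z ∈ N m ∧ dist q z ≤ 5 * sc m ∧ ∀ x ∈ N m, dist q x < sc m / 8 → z = x}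

lemma adm_sub (m : ℤ) (q : Pt n) : adm N m q ⊆ N m := fun _ hz => hz.1

section adm
variable (hNS : NetSys Γ N)
include hNS

lemma adm_finite (m : ℤ) (q : Pt n) : (adm N m q).Finite := by
  refine Set.Finite.subset ((hNS.sep m).finite_inter_closedBall (sc_pos m) q (5 * sc m)) ?_
  intro z hz
  exact ⟨hz.1, by rw [mem_closedBall, dist_comm]; exact hz.2.1⟩

lemma adm_forced_unique {m : ℤ} {q x x' : Pt n} (hx : x ∈ N m) (hx' : x' ∈ N m)
    (hd : dist q x < sc m / 8) (hd' : dist q x' < sc m / 8) : x = x' := by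
  by_contra hne
  have := hNS.sep m x hx x' hx' hne
  have h4 : dist x x' ≤ dist x q + dist q x' := dist_triangle _ _ _
  rw [dist_comm x q] at h4
  have := sc_pos m
  linarith

lemma adm_nonempty {m : ℤ} {q : Pt n} (hq : q ∈ Γ) : (adm N m q).Nonempty := by
  by_cases hf : ∃ x ∈ N m, dist q x < sc m / 8
  · obtain ⟨x, hx, hxd⟩ := hf
    have := sc_pos m
    exact ⟨x, hx, by linarith, fun x' hx' hd' => adm_forced_unique hNS hx hx' hxd hd'⟩
  · push_neg at hf
    obtain ⟨x, hx, hxd⟩ := hNS.cov m q hq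
    have := sc_pos m
    exact ⟨x, hx, by linarith, fun x' hx' hd' => absurd hd' (not_lt.2 (hf x' hx'))⟩

lemma adm_step {m : ℤ} {q z : Pt n} (hz : z ∈ adm N (m+1) q) :
    fnear N m z ∈ adm N m q := by
  obtain ⟨hzN, hzd, _⟩ := hz
  have hsc := sc_pos m
  have hss := sc_succ m
  by_cases hf : ∃ x ∈ N m, dist q x < sc m / 8
  · obtain ⟨x, hx, hxd⟩ := hf
    have hcap : fnear N m z = x := by
      apply fnear_capture hNS hx
      have h4 : dist z x ≤ dist z q + dist q x := dist_triangle _ _ _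
      rw [dist_comm z q] at h4
      linarith
    rw [hcap]
    exact ⟨hx, by linarith, fun x' hx' hd' => adm_forced_unique hNS hx hx' hxd hd'⟩
  · push_neg at hf
    have hzΓ : z ∈ Γ := hNS.sub (m+1) hzN
    have hfd : dist z (fnear N m z) < sc m := fnear_covdist hNS hzΓ
    refine ⟨fnear_mem hNS m z, ?_, fun x' hx' hd' => absurd hd' (not_lt.2 (hf x' hx'))⟩
    have h4 : dist q (fnear N m z) ≤ dist q z + dist z (fnear N m z) := dist_triangle _ _ _
    linarith

end adm
/-- upward admissible chains of height `b` starting at `z` at level `m`. -/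
def seg (N : ℤ → Set (Pt n)) (m : ℤ) (q z : Pt n) (b : ℕ) : Prop :=
  ∃ c : ℕ → Pt n, c 0 = z ∧ (∀ i : ℕ, i ≤ b → c i ∈ adm N (m + i) q) ∧
    (∀ i : ℕ, i + 1 ≤ b → fnear N (m + i) (c (i+1)) = c i)

/-- `z` admits upward admissible chains of arbitrary height. -/
def ext (N : ℤ → Set (Pt n)) (m : ℤ) (q z : Pt n) : Prop := ∀ b : ℕ, seg N m q z b

lemma seg_mono {m : ℤ} {q z : Pt n} {b b' : ℕ} (h : b' ≤ b) (hs : seg N m q z b) :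
    seg N m q z b' := by
  obtain ⟨c, h0, h1, h2⟩ := hs
  exact ⟨c, h0, fun i hi => h1 i (hi.trans h), fun i hi => h2 i (hi.trans h)⟩

lemma seg_shift {m : ℤ} {q z : Pt n} {b : ℕ} (hs : seg N m q z (b+1)) :
    ∃ z', z' ∈ adm N (m+1) q ∧ fnear N m z' = z ∧ seg N (m+1) q z' b := by
  obtain ⟨c, h0, h1, h2⟩ := hs
  refine ⟨c 1, ?_, ?_, ⟨fun i => c (i+1), rfl, fun i hi => ?_, fun i hi => ?_⟩⟩
  · have := h1 1 (by omega)
    have he : (m + (1:ℕ) : ℤ) = m + 1 := by push_cast; ring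
    rwa [he] at this
  · have := h2 0 (by omega)
    have he : (m + (0:ℕ) : ℤ) = m := by push_cast; ring
    rw [he, h0] at this
    exact this
  · have := h1 (i+1) (by omega)
    have he : (m + (↑(i+1)) : ℤ) = (m + 1) + i := by push_cast; ring
    rwa [he] at this
  · have := h2 (i+1) (by omega)
    have he : (m + (↑(i+1)) : ℤ) = (m + 1) + i := by push_cast; ring
    rwa [he] at this

section chains
variable (hNS : NetSys Γ N)
include hNS

lemma seg_exists {q : Pt n} (hq : q ∈ Γ) (m : ℤ) (b : ℕ) :
    ∃ z ∈ adm N m q, seg N m q z b := by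
  obtain ⟨w, hw⟩ := adm_nonempty hNS (m := m + b) hq
  let g : ℕ → Pt n := fun j => Nat.rec w (fun j' gj => fnear N (m + b - (j'+1)) gj) j
  have hg : ∀ j : ℕ, g j ∈ adm N (m + b - j) q := by
    intro j
    induction j with
    | zero =>
        have h0 : g 0 = w := rfl
        simpa [h0] using hw
    | succ j ih =>
        have : g (j+1) = fnear N (m + b - (j+1)) (g j) := rfl
        rw [this]
        have he : (m + b - (j:ℤ)) = (m + b - ((j:ℤ)+1)) + 1 := by ring
        rw [he] at ih
        have := adm_step hNS ih
        have he2 : ((m + b - ((j:ℤ)+1)) : ℤ) = m + b - (↑(j+1)) := by push_cast; ring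
        rwa [he2] at this
  have hcast : ∀ i : ℕ, i ≤ b → (m + b - (↑(b - i) : ℤ)) = m + i := by
    intro i hi
    have : ((b - i : ℕ) : ℤ) = (b : ℤ) - i := by omega
    rw [this]; ring
  refine ⟨g b, ?_, ⟨fun i => g (b - i), rfl, fun i hi => ?_, fun i hi => ?_⟩⟩
  · have := hg b
    have he : (m + b - (b:ℤ)) = m := by ring
    rwa [he] at this
  · have := hg (b - i)
    rwa [hcast i hi] at this
  · have h1 : b - i = (b - (i+1)) + 1 := by omega
    have : g ((b - (i+1)) + 1) = fnear N (m + b - (↑(b - (i+1)) + 1)) (g (b - (i+1))) := rfl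
    rw [← h1] at this
    have he : (m + b - (↑(b - (i+1)) + 1) : ℤ) = m + i := by
      have : ((b - (i+1) : ℕ) : ℤ) = (b : ℤ) - i - 1 := by omega
      rw [this]; ring
    rw [he] at this
    show fnear N (m + i) (g (b - (i+1))) = g (b - i)
    exact this.symm

omit hNS in
lemma exists_forall_of_finite {S : Set (Pt n)} (hS : S.Finite) (P : Pt n → ℕ → Prop)
    (hmono : ∀ z b b', b' ≤ b → P z b → P z b')
    (hex : ∀ b, ∃ z ∈ S, P z b) : ∃ z ∈ S, ∀ b, P z b := by
  by_contra hcon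
  push_neg at hcon
  choose! g hg using hcon
  have hB : ∀ z ∈ S, g z ≤ hS.toFinset.sup g := by
    intro z hz
    exact Finset.le_sup (hS.mem_toFinset.2 hz)
  obtain ⟨z, hzS, hzP⟩ := hex (hS.toFinset.sup g)
  exact hg z hzS (hmono z _ _ (hB z hzS) hzP)

lemma ext_exists {q : Pt n} (hq : q ∈ Γ) (m : ℤ) : ∃ z, ext N m q z := by
  obtain ⟨z, hzS, hz⟩ := exists_forall_of_finite (adm_finite hNS m q)
    (fun z b => seg N m q z b) (fun z b b' h hs => seg_mono h hs)
    (fun b => seg_exists hNS hq m b)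
  exact ⟨z, hz⟩

omit hNS in
lemma ext_adm {m : ℤ} {q z : Pt n} (h : ext N m q z) : z ∈ adm N m q := by
  obtain ⟨c, h0, h1, _⟩ := h 0
  have := h1 0 le_rfl
  rw [h0] at this
  have he : (m + (0:ℕ) : ℤ) = m := by push_cast; ring
  rwa [he] at this

lemma ext_step {m : ℤ} {q z : Pt n} (h : ext N m q z) :
    ∃ z', ext N (m+1) q z' ∧ fnear N m z' = z := by
  have hfin : ({z' | z' ∈ adm N (m+1) q ∧ fnear N m z' = z}).Finite :=
    Set.Finite.subset (adm_finite hNS (m+1) q) (fun z' hz' => hz'.1)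
  obtain ⟨z', hz'S, hz'⟩ := exists_forall_of_finite hfin
    (fun z' b => seg N (m+1) q z' b) (fun z' b b' hb hs => seg_mono hb hs)
    (fun b => by
      obtain ⟨z', hz'a, hz'f, hz's⟩ := seg_shift (h (b+1))
      exact ⟨z', ⟨hz'a, hz'f⟩, hz's⟩)
  exact ⟨z', hz', hz'S.2⟩

end chains

/-- canonical pick from an enumeration. -/
def pick (P : Pt n → Prop) (e : ℕ → Pt n) : Pt n := e (sInf {i | P (e i)})

lemma pick_spec {P : Pt n → Prop} {e : ℕ → Pt n} (h : ∃ i, P (e i)) : P (pick P e) :=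
  Nat.sInf_mem h

lemma pick_eq_iff {P : Pt n → Prop} {e : ℕ → Pt n} {x : Pt n} (h : ∃ i, P (e i)) :
    pick P e = x ↔ ∃ i, e i = x ∧ P (e i) ∧ ∀ i' < i, ¬ P (e i') := by
  constructor
  · intro hx
    exact ⟨sInf {i | P (e i)}, hx, Nat.sInf_mem h, fun i' hi' => Nat.notMem_of_lt_sInf hi'⟩
  · rintro ⟨i, hei, hPi, hmin⟩
    have h1 : sInf {i | P (e i)} ≤ i := Nat.sInf_le hPi
    have h2 : ¬ (sInf {i | P (e i)} < i) := fun hlt => hmin _ hlt (Nat.sInf_mem h)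
    have : sInf {i | P (e i)} = i := by omega
    rw [pick, this, hei]

section branchdef
variable (N : ℤ → Set (Pt n)) (E : ℤ → ℕ → Pt n)

/-- the canonical branch, at nonnegative levels. -/
def up (q : Pt n) : ℕ → Pt n
  | 0 => pick (fun z => ext N 0 q z) (E 0)
  | (t+1) => pick (fun z => ext N (↑(t+1)) q z ∧ fnear N t z = up q t) (E (t+1))

/-- iterated parent map, from level `j + i` down to level `j`. -/
def Fit : ℤ → ℕ → Pt n → Pt n
  | _, 0, z => z
  | j, (i+1), z => fnear N j (Fit (j+1) i z)

/-- the canonical branch through `q`: level `j` net point. -/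
def beta (q : Pt n) (j : ℤ) : Pt n :=
  if 0 ≤ j then up N E q j.toNat else Fit N j (-j).toNat (up N E q 0)

end branchdef


section branchlem
variable (hNS : NetSys Γ N) {E : ℤ → ℕ → Pt n} (hE : ∀ m, N m = Set.range (E m))
include hNS hE

lemma up_hex0 {q : Pt n} (hq : q ∈ Γ) : ∃ i, ext N 0 q (E 0 i) := by
  obtain ⟨z, hz⟩ := ext_exists hNS hq 0
  have hz' : z ∈ N 0 := adm_sub _ _ (ext_adm hz)
  rw [hE 0] at hz'
  obtain ⟨i, rfl⟩ := hz'
  exact ⟨i, hz⟩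

lemma up_hexS {q : Pt n} (t : ℕ) (hext : ext N t q (up N E q t)) :
    ∃ i, ext N (↑(t+1)) q (E (t+1) i) ∧ fnear N t (E (t+1) i) = up N E q t := by
  obtain ⟨z', hz'e, hz'f⟩ := ext_step hNS hext
  have hcast : ((t:ℤ) + 1) = ((t+1:ℕ):ℤ) := by push_cast; ring
  rw [hcast] at hz'e
  have hz' : z' ∈ N (↑(t+1)) := adm_sub _ _ (ext_adm hz'e)
  rw [hE _] at hz'
  obtain ⟨i, rfl⟩ := hz'
  exact ⟨i, hz'e, hz'f⟩

lemma up_ext {q : Pt n} (hq : q ∈ Γ) : ∀ t : ℕ, ext N t q (up N E q t) := by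
  intro t
  induction t with
  | zero =>
      have h := pick_spec (up_hex0 hNS hE hq)
      exact h
  | succ t ih =>
      have h := pick_spec (P := fun z => ext N (↑(t+1)) q z ∧ fnear N (↑t) z = up N E q t)
        (e := E (↑t+1)) (up_hexS hNS hE t ih)
      exact h.1

lemma up_link {q : Pt n} (hq : q ∈ Γ) (t : ℕ) :
    fnear N (↑t) (up N E q (t+1)) = up N E q t := by
  have h := pick_spec (P := fun z => ext N (↑(t+1)) q z ∧ fnear N (↑t) z = up N E q t)
    (e := E (↑t+1)) (up_hexS hNS hE t (up_ext hNS hE hq t))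
  exact h.2

omit hNS hE in
lemma beta_nat (q : Pt n) (t : ℕ) : beta N E q (t:ℤ) = up N E q t := by
  rw [beta, if_pos (by positivity : (0:ℤ) ≤ (t:ℤ))]
  simp

lemma beta_step {q : Pt n} (hq : q ∈ Γ) (j : ℤ) :
    fnear N j (beta N E q (j+1)) = beta N E q j := by
  by_cases h : 0 ≤ j
  · obtain ⟨t, rfl⟩ : ∃ t : ℕ, j = ↑t := ⟨j.toNat, (Int.toNat_of_nonneg h).symm⟩
    have h1 : ((t:ℤ)+1) = ((t+1:ℕ):ℤ) := by push_cast; ring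
    rw [h1, beta_nat, beta_nat]
    exact up_link hNS hE hq t
  · push_neg at h
    rcases eq_or_lt_of_le (by omega : j + 1 ≤ 0) with h0 | hlt
    · have hj : j = -1 := by omega
      subst hj
      norm_num [beta, Fit]
    · have hj1 : ¬ (0 ≤ j + 1) := by omega
      have hj2 : ¬ (0 ≤ j) := by omega
      rw [beta, if_neg hj1, beta, if_neg hj2]
      have hi : (-j).toNat = (-(j+1)).toNat + 1 := by omega
      rw [hi]
      show fnear N j (Fit N (j+1) ((-(j+1)).toNat) (up N E q 0)) =
        fnear N j (Fit N (j+1) ((-(j+1)).toNat) (up N E q 0))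
      rfl

lemma beta_coh {q : Pt n} (hq : q ∈ Γ) (j : ℤ) (i : ℕ) :
    beta N E q j = Fit N j i (beta N E q (j + i)) := by
  induction i generalizing j with
  | zero => simp [Fit]
  | succ i ih =>
      have h1 : (j + ↑(i+1) : ℤ) = (j+1) + i := by push_cast; ring
      rw [h1]
      show beta N E q j = fnear N j (Fit N (j+1) i (beta N E q ((j+1) + i)))
      rw [← ih (j+1), beta_step hNS hE hq j]

omit hE in
lemma Fit_adm {q : Pt n} {j : ℤ} {i : ℕ} {z : Pt n} (hz : z ∈ adm N (j + i) q) :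
    Fit N j i z ∈ adm N j q := by
  induction i generalizing j with
  | zero =>
      have h0 : Fit N j 0 z = z := rfl
      simpa [h0] using hz
  | succ i ih =>
      show fnear N j (Fit N (j+1) i z) ∈ adm N j q
      have h1 : (j + ↑(i+1) : ℤ) = (j+1) + i := by push_cast; ring
      rw [h1] at hz
      exact adm_step hNS (ih hz)

lemma beta_adm {q : Pt n} (hq : q ∈ Γ) (j : ℤ) : beta N E q j ∈ adm N j q := by
  by_cases h : 0 ≤ j
  · obtain ⟨t, rfl⟩ : ∃ t : ℕ, j = ↑t := ⟨j.toNat, (Int.toNat_of_nonneg h).symm⟩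
    rw [beta_nat]
    exact ext_adm (up_ext hNS hE hq t)
  · rw [beta, if_neg h]
    apply Fit_adm hNS
    have h1 : (j + ↑((-j).toNat) : ℤ) = 0 := by omega
    rw [h1]
    have := ext_adm (up_ext hNS hE hq 0)
    simpa using this

lemma beta_forced {q x : Pt n} (hq : q ∈ Γ) {j : ℤ} (hx : x ∈ N j)
    (hd : dist q x < sc j / 8) : beta N E q j = x :=
  (beta_adm hNS hE hq j).2.2 x hx hd

lemma beta_mem {q : Pt n} (hq : q ∈ Γ) (j : ℤ) : beta N E q j ∈ N j :=
  (beta_adm hNS hE hq j).1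

lemma beta_dist {q : Pt n} (hq : q ∈ Γ) (j : ℤ) : dist q (beta N E q j) ≤ 5 * sc j :=
  (beta_adm hNS hE hq j).2.1

end branchlem

/-- the cube at level `j` with label `x`. -/
def cube (N : ℤ → Set (Pt n)) (E : ℤ → ℕ → Pt n) (Γ : Set (Pt n)) (j : ℤ) (x : Pt n) :
    Set (Pt n) := {q ∈ Γ | beta N E q j = x}

lemma cube_subset (N : ℤ → Set (Pt n)) (E : ℤ → ℕ → Pt n) (Γ : Set (Pt n)) (j : ℤ)
    (x : Pt n) : cube N E Γ j x ⊆ Γ := fun _ hq => hq.1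

lemma cube_disjoint {N : ℤ → Set (Pt n)} {E : ℤ → ℕ → Pt n} {Γ : Set (Pt n)} {j : ℤ}
    {x x' : Pt n} (h : x ≠ x') : cube N E Γ j x ∩ cube N E Γ j x' = ∅ := by
  ext q
  simp only [mem_inter_iff, mem_empty_iff_false, iff_false]
  rintro ⟨⟨_, h1⟩, ⟨_, h2⟩⟩
  exact h (h1 ▸ h2 ▸ rfl)

section cubelem
variable (hNS : NetSys Γ N) {E : ℤ → ℕ → Pt n} (hE : ∀ m, N m = Set.range (E m))
include hNS hE

omit hNS hE in
lemma mem_cube (q : Pt n) (hq : q ∈ Γ) (j : ℤ) : q ∈ cube N E Γ j (beta N E q j) :=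
  ⟨hq, rfl⟩

lemma mem_cube_self {j : ℤ} {x : Pt n} (hx : x ∈ N j) : x ∈ cube N E Γ j x := by
  refine ⟨hNS.sub j hx, ?_⟩
  apply beta_forced hNS hE (hNS.sub j hx) hx
  rw [dist_self]
  have := sc_pos j
  linarith

lemma cube_nonempty {j : ℤ} {x : Pt n} (hx : x ∈ N j) : (cube N E Γ j x).Nonempty :=
  ⟨x, mem_cube_self hNS hE hx⟩

lemma cube_subset_ball {j : ℤ} (x : Pt n) : cube N E Γ j x ⊆ ball x (6 * sc j) := by
  rintro q ⟨hq, hb⟩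
  have := beta_dist hNS hE hq j
  rw [hb] at this
  rw [mem_ball]
  have := sc_pos j
  linarith

lemma ball_subset_cube {j : ℤ} {x : Pt n} (hx : x ∈ N j) :
    ball x (sc j / 8) ∩ Γ ⊆ cube N E Γ j x := by
  rintro q ⟨hb, hq⟩
  refine ⟨hq, beta_forced hNS hE hq hx ?_⟩
  rw [mem_ball] at hb
  exact hb

lemma cube_nested {j : ℤ} (i : ℕ) (y : Pt n) :
    cube N E Γ (j + i) y ⊆ cube N E Γ j (Fit N j i y) := by
  rintro q ⟨hq, hb⟩
  exact ⟨hq, by rw [beta_coh hNS hE hq j i, hb]⟩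

end cubelem

section measurability
variable (hNS : NetSys Γ N) {E : ℤ → ℕ → Pt n} (hE : ∀ m, N m = Set.range (E m))
include hNS

lemma admMS (m : ℤ) (z : Pt n) : MeasurableSet {q : Pt n | z ∈ adm N m q} := by
  by_cases hz : z ∈ N m
  · have heq : {q : Pt n | z ∈ adm N m q} =
        closedBall z (5 * sc m) ∩ ⋂ x ∈ N m, {q | dist q x < sc m / 8 → z = x} := by
      ext q
      simp only [adm, mem_setOf_eq, mem_inter_iff, mem_closedBall, mem_iInter]
      constructor
      · rintro ⟨_, h2, h3⟩; exact ⟨h2, h3⟩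
      · rintro ⟨h2, h3⟩; exact ⟨hz, h2, h3⟩
    rw [heq]
    refine (measurableSet_closedBall).inter ?_
    refine MeasurableSet.biInter ((hNS.sep m).countable (sc_pos m)) (fun x hx => ?_)
    by_cases hzx : z = x
    · have : {q : Pt n | dist q x < sc m / 8 → z = x} = univ := by
        ext q; simp [hzx]
      rw [this]; exact MeasurableSet.univ
    · have : {q : Pt n | dist q x < sc m / 8 → z = x} = (ball x (sc m / 8))ᶜ := by
        ext q
        simp [hzx]
      rw [this]; exact measurableSet_ball.compl
  · have : {q : Pt n | z ∈ adm N m q} = ∅ := by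
      ext q; simp only [mem_setOf_eq, mem_empty_iff_false, iff_false]
      exact fun h => hz h.1
    rw [this]; exact MeasurableSet.empty

omit hNS in
lemma seg_zero_iff {m : ℤ} {q z : Pt n} : seg N m q z 0 ↔ z ∈ adm N m q := by
  constructor
  · rintro ⟨c, h0, h1, _⟩
    have := h1 0 le_rfl
    rw [h0] at this
    have he : (m + (0:ℕ) : ℤ) = m := by push_cast; ring
    rwa [he] at this
  · intro hz
    refine ⟨fun _ => z, rfl, fun i hi => ?_, fun i hi => by omega⟩
    have : i = 0 := by omega
    subst this
    have he : (m + (0:ℕ) : ℤ) = m := by push_cast; ring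
    rwa [he]

omit hNS in
lemma seg_succ_iff {m : ℤ} {q z : Pt n} {b : ℕ} :
    seg N m q z (b+1) ↔ z ∈ adm N m q ∧
      ∃ z', z' ∈ N (m+1) ∧ fnear N m z' = z ∧ seg N (m+1) q z' b := by
  constructor
  · intro hs
    obtain ⟨z', h1, h2, h3⟩ := seg_shift hs
    refine ⟨?_, z', adm_sub _ _ h1, h2, h3⟩
    obtain ⟨c, hc0, hc1, _⟩ := hs
    have := hc1 0 (by omega)
    rw [hc0] at this
    have he : (m + (0:ℕ) : ℤ) = m := by push_cast; ring
    rwa [he] at this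
  · rintro ⟨hz, z', hz'N, hz'f, c', hc0, hc1, hc2⟩
    refine ⟨fun i => match i with | 0 => z | (i'+1) => c' i', rfl, fun i hi => ?_, fun i hi => ?_⟩
    · match i with
      | 0 =>
          have he : (m + (0:ℕ) : ℤ) = m := by push_cast; ring
          rwa [he]
      | (i'+1) =>
          have := hc1 i' (by omega)
          have he : ((m+1) + (i':ℕ) : ℤ) = m + ↑(i'+1) := by push_cast; ring
          rwa [he] at this
    · match i with
      | 0 =>
          have he : (m + (0:ℕ) : ℤ) = m := by push_cast; ring
          rw [he]
          show fnear N m (c' 0) = z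
          rw [hc0]; exact hz'f
      | (i'+1) =>
          have := hc2 i' (by omega)
          have he : ((m+1) + (i':ℕ) : ℤ) = m + ↑(i'+1) := by push_cast; ring
          rw [he] at this
          exact this

lemma segMS : ∀ (b : ℕ) (m : ℤ) (z : Pt n), MeasurableSet {q : Pt n | seg N m q z b} := by
  intro b
  induction b with
  | zero =>
      intro m z
      have : {q : Pt n | seg N m q z 0} = {q | z ∈ adm N m q} := by
        ext q; exact seg_zero_iff
      rw [this]; exact admMS hNS m z
  | succ b ih =>
      intro m z
      have : {q : Pt n | seg N m q z (b+1)} = {q | z ∈ adm N m q} ∩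
          ⋃ (z' : Pt n) (_ : z' ∈ N (m+1) ∧ fnear N m z' = z), {q | seg N (m+1) q z' b} := by
        ext q
        simp only [mem_setOf_eq, mem_inter_iff, mem_iUnion]
        rw [seg_succ_iff]
        constructor
        · rintro ⟨h1, z', h2, h3, h4⟩; exact ⟨h1, z', ⟨h2, h3⟩, h4⟩
        · rintro ⟨h1, z', ⟨h2, h3⟩, h4⟩; exact ⟨h1, z', h2, h3, h4⟩
      rw [this]
      refine (admMS hNS m z).inter ?_
      have hsub : {z' | z' ∈ N (m+1) ∧ fnear N m z' = z}.Countable :=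
        Set.Countable.mono (fun z' hz' => hz'.1) ((hNS.sep (m+1)).countable (sc_pos (m+1)))
      exact MeasurableSet.biUnion hsub (fun z' _ => ih (m+1) z')

lemma extMS (m : ℤ) (z : Pt n) : MeasurableSet {q : Pt n | ext N m q z} := by
  have : {q : Pt n | ext N m q z} = ⋂ b : ℕ, {q | seg N m q z b} := by
    ext q; simp [ext, mem_iInter]
  rw [this]
  exact MeasurableSet.iInter (fun b => segMS hNS b m z)

variable (hΓ : MeasurableSet Γ)
include hE hΓ

lemma upMS : ∀ (t : ℕ) (x : Pt n), MeasurableSet (Γ ∩ {q | up N E q t = x}) := by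
  intro t
  induction t with
  | zero =>
      intro x
      have heq : Γ ∩ {q | up N E q 0 = x} =
          Γ ∩ ⋃ (i : ℕ) (_ : E 0 i = x),
            ({q | ext N 0 q (E 0 i)} ∩ ⋂ (i' : ℕ) (_ : i' < i), {q | ext N 0 q (E 0 i')}ᶜ) := by
        ext q
        simp only [mem_inter_iff, mem_setOf_eq, mem_iUnion, mem_iInter, mem_compl_iff,
          and_congr_right_iff]
        intro hq
        rw [show up N E q 0 = pick (fun z => ext N 0 q z) (E 0) from rfl]
        rw [pick_eq_iff (up_hex0 hNS hE hq)]
        constructor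
        · rintro ⟨i, h1, h2, h3⟩; exact ⟨i, h1, h2, h3⟩
        · rintro ⟨i, h1, h2, h3⟩; exact ⟨i, h1, h2, h3⟩
      rw [heq]
      refine hΓ.inter (MeasurableSet.iUnion (fun i => MeasurableSet.iUnion (fun _ => ?_)))
      exact (extMS hNS 0 (E 0 i)).inter (MeasurableSet.iInter (fun i' =>
        MeasurableSet.iInter (fun _ => (extMS hNS 0 (E 0 i')).compl)))
  | succ t ih =>
      intro x
      set D : ℕ → Set (Pt n) := fun i =>
        {q | ext N (↑(t+1)) q (E (↑t+1) i)} ∩ (Γ ∩ {q | up N E q t = fnear N (↑t) (E (↑t+1) i)})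
        with hD
      have hDms : ∀ i, MeasurableSet (D i) := fun i =>
        (extMS hNS _ _).inter (ih _)
      have heq : Γ ∩ {q | up N E q (t+1) = x} =
          Γ ∩ ⋃ (i : ℕ) (_ : E (↑t+1) i = x), (D i ∩ ⋂ (i' : ℕ) (_ : i' < i), (D i')ᶜ) := by
        ext q
        simp only [mem_inter_iff, mem_setOf_eq, mem_iUnion, mem_iInter, mem_compl_iff,
          and_congr_right_iff, hD]
        intro hq
        have hiff : ∀ i : ℕ, ((ext N (↑(t+1)) q (E (↑t+1) i) ∧
            fnear N (↑t) (E (↑t+1) i) = up N E q t) ↔ q ∈ D i) := by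
          intro i
          simp only [hD, mem_inter_iff, mem_setOf_eq]
          constructor
          · rintro ⟨h1, h2⟩; exact ⟨h1, hq, h2.symm⟩
          · rintro ⟨h1, _, h2⟩; exact ⟨h1, h2.symm⟩
        rw [show (up N E q (t+1)) =
          pick (fun z => ext N (↑(t+1)) q z ∧ fnear N (↑t) z = up N E q t) (E (↑t+1)) from rfl]
        rw [pick_eq_iff (up_hexS hNS hE t (up_ext hNS hE hq t))]
        constructor
        · rintro ⟨i, h1, h2, h3⟩
          exact ⟨i, h1, (hiff i).1 h2, fun i' hi' hDi' => h3 i' hi' ((hiff i').2 hDi')⟩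
        · rintro ⟨i, h1, h2, h3⟩
          exact ⟨i, h1, (hiff i).2 h2, fun i' hi' hP => h3 i' hi' ((hiff i').1 hP)⟩
      rw [heq]
      refine hΓ.inter (MeasurableSet.iUnion (fun i => MeasurableSet.iUnion (fun _ => ?_)))
      exact (hDms i).inter (MeasurableSet.iInter (fun i' =>
        MeasurableSet.iInter (fun _ => (hDms i').compl)))

lemma cubeMS (j : ℤ) (x : Pt n) : MeasurableSet (cube N E Γ j x) := by
  by_cases h : 0 ≤ j
  · obtain ⟨t, rfl⟩ : ∃ t : ℕ, j = ↑t := ⟨j.toNat, (Int.toNat_of_nonneg h).symm⟩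
    have : cube N E Γ (↑t) x = Γ ∩ {q | up N E q t = x} := by
      ext q
      simp only [cube, mem_setOf_eq, mem_inter_iff]
      rw [beta_nat]
    rw [this]
    exact upMS hNS hE hΓ t x
  · have : cube N E Γ j x =
        ⋃ (y : Pt n) (_ : y ∈ N 0 ∧ Fit N j ((-j).toNat) y = x), (Γ ∩ {q | up N E q 0 = y}) := by
      ext q
      simp only [cube, mem_setOf_eq, mem_iUnion, mem_inter_iff]
      constructor
      · rintro ⟨hq, hb⟩
        rw [beta, if_neg h] at hb
        refine ⟨up N E q 0, ⟨?_, hb⟩, hq, rfl⟩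
        simpa [beta] using beta_mem hNS hE hq 0
      · rintro ⟨y, ⟨hyN, hyF⟩, hq, hup⟩
        refine ⟨hq, ?_⟩
        rw [beta, if_neg h, hup, hyF]
    rw [this]
    have hsub : {y | y ∈ N 0 ∧ Fit N j ((-j).toNat) y = x}.Countable :=
      Set.Countable.mono (fun y hy => hy.1) ((hNS.sep 0).countable (sc_pos 0))
    exact MeasurableSet.biUnion hsub (fun y _ => upMS hNS hE hΓ 0 y)

end measurability


lemma rho_le_pow {ρ : ℝ} (h0 : 0 < ρ) (h1 : ρ < 1) :
    ρ ≤ ((16:ℝ)⁻¹) ^ (2 * ⌊Real.logb 2 ρ⁻¹ / 8⌋₊) := by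
  set t := ⌊Real.logb 2 ρ⁻¹ / 8⌋₊ with ht
  have hlogb : 0 ≤ Real.logb 2 ρ⁻¹ := by
    apply Real.logb_nonneg (by norm_num)
    rw [le_inv_comm₀] <;> simp [h0, h1.le]
  have hfl : (t : ℝ) ≤ Real.logb 2 ρ⁻¹ / 8 := Nat.floor_le (by positivity)
  have h8t : (8 * t : ℝ) ≤ Real.logb 2 ρ⁻¹ := by linarith
  have hpow : ((16:ℝ)⁻¹) ^ (2*t) = (2:ℝ) ^ (-(8*t:ℝ)) := by
    rw [show (16:ℝ)⁻¹ = (2:ℝ)^(-4:ℝ) by norm_num [Real.rpow_neg, Real.rpow_natCast]]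
    rw [← Real.rpow_natCast ((2:ℝ)^(-4:ℝ)) (2*t), ← Real.rpow_mul (by norm_num)]
    congr 1
    push_cast
    ring
  rw [hpow]
  have h2 : (2:ℝ) ^ (Real.logb 2 ρ⁻¹) = ρ⁻¹ :=
    Real.rpow_logb (by norm_num) (by norm_num) (by positivity)
  have : ρ = (2:ℝ) ^ (-Real.logb 2 ρ⁻¹) := by
    rw [Real.rpow_neg (by norm_num), h2, inv_inv]
  nth_rewrite 1 [this]
  apply Real.rpow_le_rpow_of_exponent_le (by norm_num)
  linarith

lemma decay_le {c ρ : ℝ} (hc0 : 0 < c) (hc : c ≤ 1/2) (h0 : 0 < ρ) (h1 : ρ < 1) :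
    (1 - c) ^ (⌊Real.logb 2 ρ⁻¹ / 8⌋₊) ≤ 2 * ρ ^ (Real.log (1-c)⁻¹ / (8 * Real.log 2)) := by
  set t := ⌊Real.logb 2 ρ⁻¹ / 8⌋₊ with ht
  set x := Real.logb 2 ρ⁻¹ / 8 with hx
  have hb0 : 0 < 1 - c := by linarith
  have hb1 : 1 - c ≤ 1 := by linarith
  have hlogb : 0 ≤ Real.logb 2 ρ⁻¹ := by
    apply Real.logb_nonneg (by norm_num)
    rw [le_inv_comm₀] <;> simp [h0, h1.le]
  have hx0 : 0 ≤ x := by rw [hx]; positivity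
  have htx : x - 1 ≤ (t:ℝ) := by
    have := Nat.lt_floor_add_one x
    linarith
  have h1' : (1 - c) ^ t = (1 - c) ^ (t : ℝ) := by
    rw [Real.rpow_natCast]
  rw [h1']
  have h2' : (1 - c) ^ (t:ℝ) ≤ (1 - c) ^ (x - 1) :=
    Real.rpow_le_rpow_of_exponent_ge hb0 hb1 htx
  refine h2'.trans ?_
  have h3' : (1 - c) ^ (x - 1) = (1 - c)⁻¹ * (1 - c) ^ x := by
    rw [Real.rpow_sub hb0, Real.rpow_one]
    ring
  rw [h3']
  have h4 : (1 - c)⁻¹ ≤ 2 := by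
    rw [inv_le_comm₀ hb0 (by norm_num)]
    linarith
  have h5 : (1 - c) ^ x = ρ ^ (Real.log (1-c)⁻¹ / (8 * Real.log 2)) := by
    rw [Real.rpow_def_of_pos hb0, Real.rpow_def_of_pos h0]
    congr 1
    rw [hx, Real.logb, Real.log_inv, Real.log_inv]
    have hl2 : Real.log 2 ≠ 0 := by
      have := Real.log_pos (by norm_num : (1:ℝ) < 2)
      linarith
    field_simp
  rw [h5]
  have hρpow : 0 ≤ ρ ^ (Real.log (1-c)⁻¹ / (8 * Real.log 2)) := Real.rpow_nonneg h0.le _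
  nlinarith

/-- the small-boundary decay constant. -/
def creal (d : ℕ) (C₀ : ℝ) : ℝ := C₀⁻¹ * C₀⁻¹ * (96:ℝ)⁻¹ ^ d

lemma creal_pos {d : ℕ} {C₀ : ℝ} (hC₀ : 1 ≤ C₀) : 0 < creal d C₀ := by
  have : (0:ℝ) < C₀ := by linarith
  unfold creal
  positivity

lemma creal_le {d : ℕ} {C₀ : ℝ} (hd : 1 ≤ d) (hC₀ : 1 ≤ C₀) : creal d C₀ ≤ 1/2 := by
  have h0 : (0:ℝ) < C₀ := by linarith
  have h1 : C₀⁻¹ ≤ 1 := by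
    rw [inv_le_one_iff₀]; right; exact hC₀
  have h2 : ((96:ℝ)⁻¹) ^ d ≤ (96:ℝ)⁻¹ ^ 1 := by
    apply pow_le_pow_of_le_one (by norm_num) (by norm_num)
    exact hd
  have h3 : (0:ℝ) < ((96:ℝ)⁻¹) ^ d := by positivity
  have h4 : (0:ℝ) ≤ C₀⁻¹ := by positivity
  have h2' : ((96:ℝ)⁻¹)^d ≤ 1/96 := by rw [pow_one] at h2; simpa using h2
  have h5 : C₀⁻¹ * C₀⁻¹ ≤ 1 := by nlinarith
  have h6 : creal d C₀ ≤ ((96:ℝ)⁻¹)^d := by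
    unfold creal
    nlinarith
  linarith

section measure_est
variable {d : ℕ} {C₀ : ℝ}
variable (hNS : NetSys Γ N) {E : ℤ → ℕ → Pt n} (hE : ∀ m, N m = Set.range (E m))
variable (hΓms : MeasurableSet Γ)
variable (hd : 1 ≤ d) (hC₀ : 1 ≤ C₀) (hAR : AhlforsRegular n d C₀ Γ)
include hNS hE hd hC₀ hAR

omit hNS hE in
/-- `Γ` contains points far from any of its points. -/
lemma exists_far {x : Pt n} (hx : x ∈ Γ) {r : ℝ} (hr : 0 < r) :
    ∃ w ∈ Γ, r ≤ dist x w := by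
  by_contra hcon
  push_neg at hcon
  have hC0 : (0:ℝ) < C₀ := by linarith
  set R : ℝ := (C₀*C₀ + 1) * r with hR
  have hRpos : 0 < R := by positivity
  have hsub : ball x R ∩ Γ ⊆ ball x r ∩ Γ := by
    rintro w ⟨_, hw⟩
    exact ⟨by rw [mem_ball, dist_comm]; exact hcon w hw, hw⟩
  have h1 := (hAR x hx R hRpos).1
  have h2 := (hAR x hx r hr).2
  have hle : ENNReal.ofReal (C₀⁻¹ * R^d) ≤ ENNReal.ofReal (C₀ * r^d) :=
    le_trans h1 (le_trans (measure_mono hsub) h2)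
  rw [ENNReal.ofReal_le_ofReal_iff (by positivity)] at hle
  have hkey : C₀ * r^d < C₀⁻¹ * R^d := by
    have hrd : (0:ℝ) < r^d := by positivity
    have hRd : (C₀*C₀ + 1) * r^d ≤ R^d := by
      rw [hR, mul_pow]
      have h5 : C₀*C₀ + 1 ≤ (C₀*C₀ + 1)^d := le_self_pow₀ (by nlinarith) (by omega)
      nlinarith
    have : C₀⁻¹ * ((C₀*C₀+1) * r^d) ≤ C₀⁻¹ * R^d := by
      apply mul_le_mul_of_nonneg_left hRd (by positivity)
    have hexp : C₀⁻¹ * ((C₀*C₀+1) * r^d) = C₀ * r^d + C₀⁻¹ * r^d := by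
      field_simp
    rw [hexp] at this
    have : (0:ℝ) < C₀⁻¹ * r^d := by positivity
    linarith
  linarith

lemma cube_meas_upper {m : ℤ} {y : Pt n} (hy : y ∈ N m) :
    μH[(d:ℝ)] (cube N E Γ m y) ≤ ENNReal.ofReal (C₀ * (6 * sc m)^d) := by
  refine le_trans (measure_mono ?_) (hAR y (hNS.sub m hy) (6 * sc m)
    (by have := sc_pos m; linarith)).2
  intro q hq
  exact ⟨cube_subset_ball hNS hE y hq, hq.1⟩

lemma cube_meas_ne_top {m : ℤ} {y : Pt n} (hy : y ∈ N m) :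
    μH[(d:ℝ)] (cube N E Γ m y) ≠ ⊤ :=
  (lt_of_le_of_lt (cube_meas_upper hNS hE hd hC₀ hAR hy) ENNReal.ofReal_lt_top).ne

lemma cube_meas_lower {m : ℤ} {y : Pt n} (hy : y ∈ N m) :
    ENNReal.ofReal (creal d C₀) * μH[(d:ℝ)] (cube N E Γ m y) ≤
      μH[(d:ℝ)] (ball y (sc m / 16) ∩ Γ) := by
  have hsc := sc_pos m
  have hC0 : (0:ℝ) < C₀ := by linarith
  calc ENNReal.ofReal (creal d C₀) * μH[(d:ℝ)] (cube N E Γ m y)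
      ≤ ENNReal.ofReal (creal d C₀) * ENNReal.ofReal (C₀ * (6 * sc m)^d) :=
        mul_le_mul_right (cube_meas_upper hNS hE hd hC₀ hAR hy) _
    _ = ENNReal.ofReal (creal d C₀ * (C₀ * (6 * sc m)^d)) := by
        rw [← ENNReal.ofReal_mul (creal_pos hC₀).le]
    _ = ENNReal.ofReal (C₀⁻¹ * (sc m / 16)^d) := by
        congr 1
        have h1 : ((96:ℝ)⁻¹)^d * (6 * sc m)^d = (sc m/16)^d := by
          rw [← mul_pow]
          congr 1
          ring
        have hC0' : C₀ ≠ 0 := ne_of_gt hC0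
        have h2 : C₀⁻¹ * C₀⁻¹ * C₀ = C₀⁻¹ := by field_simp
        calc creal d C₀ * (C₀ * (6*sc m)^d)
            = (C₀⁻¹*C₀⁻¹*C₀) * (((96:ℝ)⁻¹)^d * (6*sc m)^d) := by unfold creal; ring
          _ = C₀⁻¹ * (sc m/16)^d := by rw [h1, h2]
    _ ≤ μH[(d:ℝ)] (ball y (sc m / 16) ∩ Γ) :=
        (hAR y (hNS.sub m hy) (sc m / 16) (by linarith)).1

end measure_est

lemma le_infDist' {n : ℕ} {s : Set (Pt n)} (hs : s.Nonempty) {x : Pt n} {r : ℝ}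
    (h : ∀ w ∈ s, r ≤ dist x w) : r ≤ infDist x s := by
  by_contra hlt
  push_neg at hlt
  obtain ⟨w, hw, hd⟩ := (infDist_lt_iff hs).1 hlt
  linarith [h w hw]

section layers
variable {d : ℕ} {C₀ : ℝ}
variable (hNS : NetSys Γ N) {E : ℤ → ℕ → Pt n} (hE : ∀ m, N m = Set.range (E m))
variable (hΓms : MeasurableSet Γ)
variable (hd : 1 ≤ d) (hC₀ : 1 ≤ C₀) (hAR : AhlforsRegular n d C₀ Γ)
include hNS hE hΓms hd hC₀ hAR

lemma far_nonempty {j : ℤ} {x : Pt n} (hx : x ∈ N j) : (Γ \ cube N E Γ j x).Nonempty := by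
  obtain ⟨w, hwΓ, hw⟩ := exists_far hd hC₀ hAR (hNS.sub j hx)
    (r := 6 * sc j) (by have := sc_pos j; linarith)
  refine ⟨w, hwΓ, fun hwQ => ?_⟩
  have h2 := cube_subset_ball hNS hE (j := j) x hwQ
  rw [mem_ball, dist_comm] at h2
  linarith

lemma layer_iter {j m : ℤ} {x : Pt n} (hx : x ∈ N j) (hjm : j ≤ m) :
    μH[(d:ℝ)] {p | p ∈ cube N E Γ j x ∧ infDist p (Γ \ cube N E Γ j x) ≤ 12 * sc (m+2)} ≤
      ENNReal.ofReal (1 - creal d C₀) *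
        μH[(d:ℝ)] {p | p ∈ cube N E Γ j x ∧ infDist p (Γ \ cube N E Γ j x) ≤ 12 * sc m} := by
  set Q := cube N E Γ j x with hQdef
  set G := Γ \ Q with hGdef
  set L : Set (Pt n) := {p | p ∈ Q ∧ infDist p G ≤ 12 * sc m} with hLdef
  set L' : Set (Pt n) := {p | p ∈ Q ∧ infDist p G ≤ 12 * sc (m+2)} with hL'def
  have hQΓ : Q ⊆ Γ := cube_subset N E Γ j x
  have hL'Q : L' ⊆ Q := fun p hp => hp.1
  have hLQ : L ⊆ Q := fun p hp => hp.1
  have hGne : G.Nonempty := far_nonempty hNS hE hΓms hd hC₀ hAR hx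
  have hscm := sc_pos m
  have hsc2 : sc (m+2) = sc m / 256 := by
    rw [show (m+2 : ℤ) = (m+1)+1 by ring, sc_succ, sc_succ]; ring
  set i0 : ℕ := (m - j).toNat with hi0
  have hmj : m = j + (i0:ℤ) := by omega
  set I := {y | y ∈ N m ∧ (cube N E Γ m y ∩ L').Nonempty} with hIdef
  have hIc : I.Countable :=
    Set.Countable.mono (fun y hy => hy.1) ((hNS.sep m).countable (sc_pos m))
  have hRQ : ∀ y ∈ I, cube N E Γ m y ⊆ Q := by
    rintro y ⟨hyN, p₀, hp₀R, hp₀L'⟩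
    have hxeq : Fit N j i0 y = x := by
      have h1 : beta N E p₀ j = Fit N j i0 (beta N E p₀ m) := by
        have h := beta_coh hNS hE hp₀R.1 j i0
        rwa [← hmj] at h
      rw [hp₀R.2] at h1
      have h2 : beta N E p₀ j = x := (hL'Q hp₀L').2
      rw [h2] at h1
      exact h1.symm
    intro p hp
    refine ⟨hp.1, ?_⟩
    have h := beta_coh hNS hE hp.1 j i0
    rw [← hmj] at h
    rw [h, hp.2, hxeq]
  have hdist5 : ∀ y : Pt n, ∀ p ∈ cube N E Γ m y, dist p y ≤ 5 * sc m := by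
    intro y p hp
    have := beta_dist hNS hE hp.1 m
    rwa [hp.2] at this
  have hRL : ∀ y ∈ I, cube N E Γ m y ⊆ L := by
    intro y hyI p hp
    obtain ⟨hyN, p₀, hp₀R, hp₀L'⟩ := hyI
    refine ⟨hRQ y ⟨hyN, p₀, hp₀R, hp₀L'⟩ hp, ?_⟩
    have h1 : infDist p G ≤ infDist p₀ G + dist p p₀ := infDist_le_infDist_add_dist
    have h2 : dist p p₀ ≤ dist p y + dist y p₀ := dist_triangle _ _ _
    have h3 : dist y p₀ = dist p₀ y := dist_comm _ _
    have h4 : infDist p₀ G ≤ 12 * sc (m+2) := hp₀L'.2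
    have h5 := hdist5 y p hp
    have h6 := hdist5 y p₀ hp₀R
    rw [hsc2] at h4
    rw [h3] at h2
    linarith
  have hper : ∀ y ∈ I, μH[(d:ℝ)] (cube N E Γ m y ∩ L') ≤
      ENNReal.ofReal (1 - creal d C₀) * μH[(d:ℝ)] (cube N E Γ m y) := by
    intro y hyI
    have hyN := hyI.1
    have hRQ' := hRQ y hyI
    have hBsub : ball y (sc m/16) ∩ Γ ⊆ cube N E Γ m y :=
      Subset.trans (inter_subset_inter_left _ (ball_subset_ball (by linarith)))
        (ball_subset_cube hNS hE hyN)
    have hBdisj : Disjoint (cube N E Γ m y ∩ L') (ball y (sc m/16) ∩ Γ) := by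
      rw [Set.disjoint_left]
      rintro p ⟨hpR, hpL'⟩ ⟨hpb, hpΓ⟩
      rw [mem_ball] at hpb
      have hlow : sc m/16 ≤ infDist p G := by
        apply le_infDist' hGne
        intro w hw
        have hwR : w ∉ cube N E Γ m y := fun hwR => hw.2 (hRQ' hwR)
        have hwb : sc m/8 ≤ dist w y := by
          by_contra hlt
          push_neg at hlt
          exact hwR (ball_subset_cube hNS hE hyN ⟨mem_ball.2 hlt, hw.1⟩)
        have htr : dist w y ≤ dist w p + dist p y := dist_triangle _ _ _
        rw [dist_comm w p] at htr
        linarith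
      have hup : infDist p G ≤ 12 * sc (m+2) := hpL'.2
      rw [hsc2] at hup
      linarith
    have hBms : MeasurableSet (ball y (sc m/16) ∩ Γ) := measurableSet_ball.inter hΓms
    have harith : μH[(d:ℝ)] (cube N E Γ m y ∩ L') + μH[(d:ℝ)] (ball y (sc m/16) ∩ Γ) ≤
        μH[(d:ℝ)] (cube N E Γ m y) := by
      rw [← measure_union hBdisj hBms]
      apply measure_mono
      rintro p (h1 | h2)
      · exact h1.1
      · exact hBsub h2
    have hlow2 := cube_meas_lower hNS hE hd hC₀ hAR hyN
    have hnetop : ENNReal.ofReal (creal d C₀) * μH[(d:ℝ)] (cube N E Γ m y) ≠ ⊤ :=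
      ENNReal.mul_ne_top ENNReal.ofReal_ne_top (cube_meas_ne_top hNS hE hd hC₀ hAR hyN)
    have hsum : μH[(d:ℝ)] (cube N E Γ m y ∩ L') +
        ENNReal.ofReal (creal d C₀) * μH[(d:ℝ)] (cube N E Γ m y) ≤
        μH[(d:ℝ)] (cube N E Γ m y) :=
      le_trans (add_le_add_right hlow2 _) harith
    have hsplit : μH[(d:ℝ)] (cube N E Γ m y) =
        ENNReal.ofReal (1 - creal d C₀) * μH[(d:ℝ)] (cube N E Γ m y) +
        ENNReal.ofReal (creal d C₀) * μH[(d:ℝ)] (cube N E Γ m y) := by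
      rw [← add_mul, ← ENNReal.ofReal_add (by
          have := creal_le hd hC₀
          linarith : (0:ℝ) ≤ 1 - creal d C₀) (creal_pos hC₀).le]
      norm_num
    have hsum2 : μH[(d:ℝ)] (cube N E Γ m y ∩ L') +
        ENNReal.ofReal (creal d C₀) * μH[(d:ℝ)] (cube N E Γ m y) ≤
        ENNReal.ofReal (1 - creal d C₀) * μH[(d:ℝ)] (cube N E Γ m y) +
        ENNReal.ofReal (creal d C₀) * μH[(d:ℝ)] (cube N E Γ m y) := by
      rw [← hsplit]
      exact hsum
    exact (ENNReal.add_le_add_iff_right hnetop).1 hsum2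
  have hcover : L' ⊆ ⋃ y ∈ I, (cube N E Γ m y ∩ L') := by
    intro p hp
    have hpΓ : p ∈ Γ := hQΓ (hL'Q hp)
    have hpc : p ∈ cube N E Γ m (beta N E p m) := mem_cube p hpΓ m
    exact mem_biUnion ⟨beta_mem hNS hE hpΓ m, ⟨p, hpc, hp⟩⟩ ⟨hpc, hp⟩
  have hdisjI : I.PairwiseDisjoint (fun y => cube N E Γ m y) := by
    intro y _ y' _ hne
    rw [Function.onFun, Set.disjoint_iff_inter_eq_empty]
    exact cube_disjoint hne
  have hmeasI : ∀ y ∈ I, MeasurableSet (cube N E Γ m y) :=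
    fun y _ => cubeMS hNS hE hΓms m y
  calc μH[(d:ℝ)] L' ≤ μH[(d:ℝ)] (⋃ y ∈ I, (cube N E Γ m y ∩ L')) := measure_mono hcover
    _ ≤ ∑' y : I, μH[(d:ℝ)] (cube N E Γ m (y:Pt n) ∩ L') :=
        measure_biUnion_le μH[(d:ℝ)] hIc _
    _ ≤ ∑' y : I, ENNReal.ofReal (1 - creal d C₀) * μH[(d:ℝ)] (cube N E Γ m (y:Pt n)) :=
        ENNReal.tsum_le_tsum (fun y => hper y y.2)
    _ = ENNReal.ofReal (1 - creal d C₀) * ∑' y : I, μH[(d:ℝ)] (cube N E Γ m (y:Pt n)) :=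
        ENNReal.tsum_mul_left
    _ = ENNReal.ofReal (1 - creal d C₀) * μH[(d:ℝ)] (⋃ y ∈ I, cube N E Γ m y) := by
        rw [measure_biUnion hIc hdisjI hmeasI]
    _ ≤ ENNReal.ofReal (1 - creal d C₀) * μH[(d:ℝ)] L :=
        mul_le_mul_right (measure_mono (iUnion₂_subset hRL)) _

lemma layer_decay {j : ℤ} {x : Pt n} (hx : x ∈ N j) (t : ℕ) :
    μH[(d:ℝ)] {p | p ∈ cube N E Γ j x ∧
        infDist p (Γ \ cube N E Γ j x) ≤ 12 * sc (j + 2*(t:ℤ))} ≤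
      ENNReal.ofReal (1 - creal d C₀) ^ t * μH[(d:ℝ)] (cube N E Γ j x) := by
  induction t with
  | zero =>
      simp only [pow_zero, one_mul, Nat.cast_zero, mul_zero, add_zero]
      exact measure_mono (fun p hp => hp.1)
  | succ t ih =>
      have he : (j + 2*((t+1:ℕ):ℤ)) = (j + 2*(t:ℤ)) + 2 := by push_cast; ring
      rw [he]
      calc μH[(d:ℝ)] {p | p ∈ cube N E Γ j x ∧
              infDist p (Γ \ cube N E Γ j x) ≤ 12 * sc ((j + 2*(t:ℤ)) + 2)}
          ≤ ENNReal.ofReal (1 - creal d C₀) * μH[(d:ℝ)] {p | p ∈ cube N E Γ j x ∧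
              infDist p (Γ \ cube N E Γ j x) ≤ 12 * sc (j + 2*(t:ℤ))} :=
            layer_iter hNS hE hΓms hd hC₀ hAR hx (by omega)
        _ ≤ ENNReal.ofReal (1 - creal d C₀) *
              (ENNReal.ofReal (1 - creal d C₀) ^ t * μH[(d:ℝ)] (cube N E Γ j x)) :=
            mul_le_mul_right ih _
        _ = ENNReal.ofReal (1 - creal d C₀) ^ (t+1) * μH[(d:ℝ)] (cube N E Γ j x) := by
            rw [pow_succ]
            ring

end layers

lemma Fit_mem_net (hNS : NetSys Γ N) {j : ℤ} {i : ℕ} {x : Pt n} (hx : x ∈ N (j + i)) :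
    Fit N j i x ∈ N j := by
  induction i generalizing j with
  | zero =>
      have h0 : Fit N j 0 x = x := rfl
      simpa [h0] using hx
  | succ i ih =>
      show fnear N j (Fit N (j+1) i x) ∈ N j
      exact fnear_mem hNS j _

lemma exists_netsys {Γ : Set (Pt n)} (hne : Γ.Nonempty) : ∃ N : ℤ → Set (Pt n), NetSys Γ N := by
  have h : ∀ m : ℤ, ∃ S : Set (Pt n), S ⊆ Γ ∧ Sep (sc m) S ∧
      (∀ q ∈ Γ, ∃ x ∈ S, dist q x < sc m) ∧ S.Nonempty :=
    fun m => exists_net hne (sc_pos m)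
  choose N h1 h2 h3 h4 using h
  exact ⟨N, ⟨h1, h2, h3, h4⟩⟩

lemma exists_E (hNS : NetSys Γ N) : ∃ E : ℤ → ℕ → Pt n, ∀ m, N m = Set.range (E m) := by
  have h : ∀ m : ℤ, ∃ e : ℕ → Pt n, N m = Set.range e :=
    fun m => ((hNS.sep m).countable (sc_pos m)).exists_eq_range (hNS.nonempty m)
  choose E hE using h
  exact ⟨E, hE⟩

lemma Jmono {k m : ℤ} (h : k ≤ m) : (k+3)/4 ≤ (m+3)/4 := by omega

lemma Jlb (k : ℤ) : k ≤ 4 * ((k+3)/4) := by omega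

lemma Jub (k : ℤ) : 4 * ((k+3)/4) ≤ k + 3 := by omega

lemma sc_eq_two_zpow (j : ℤ) : sc j = (2:ℝ) ^ (-(4*j)) := by
  unfold sc
  rw [show (16:ℝ) = (2:ℝ)^(4:ℤ) by norm_num]
  rw [← zpow_mul]
  congr 1
  ring

lemma sc_J_le (k : ℤ) : sc ((k+3)/4) ≤ (2:ℝ)^(-k) := by
  rw [sc_eq_two_zpow]
  apply zpow_le_zpow_right₀ (by norm_num : (1:ℝ) ≤ 2)
  have := Jlb k
  omega

lemma le_sc_J (k : ℤ) : (2:ℝ)^(-k) ≤ 8 * sc ((k+3)/4) := by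
  rw [sc_eq_two_zpow]
  rw [show (8:ℝ) = (2:ℝ)^(3:ℤ) by norm_num, ← zpow_add₀ (by norm_num : (2:ℝ) ≠ 0)]
  apply zpow_le_zpow_right₀ (by norm_num : (1:ℝ) ≤ 2)
  have := Jub k
  omega

end DC

/-- Existence of a dyadic decomposition of an Ahlfors regular set (David, Christ):
there are constants `a₀, A₁, γ > 0`, depending only on `d, n, C₀`, such that each
generation `𝔻 k` (`k ∈ ℤ`) is a countable family of Borel subsets of `Γ` covering `Γ`,
nested between generations, of diameter at most `A₁ 2^{-k}`, each containing a surface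
ball of radius `a₀ 2^{-k}`, and with small boundary layers. -/
theorem dyadic_cubes (n d : ℕ) (C₀ : ℝ)
    (hd : 1 ≤ d) (hdn : d ≤ n) (hC₀ : 1 ≤ C₀) :
    ∃ a₀ A₁ γ : ℝ, 0 < a₀ ∧ 0 < A₁ ∧ 0 < γ ∧
      ∀ Γ : Set (Pt n), IsClosed Γ → Γ.Nonempty → AhlforsRegular n d C₀ Γ →
        ∃ 𝔻 : ℤ → Set (Set (Pt n)),
          (∀ k, (𝔻 k).Countable) ∧
          (∀ k, ∀ Q ∈ 𝔻 k, MeasurableSet Q ∧ Q ⊆ Γ) ∧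
          -- (i) each generation covers Γ
          (∀ k, ⋃₀ 𝔻 k = Γ) ∧
          -- (ii) a cube of a later generation is contained in, or disjoint from,
          -- each cube of an earlier generation
          (∀ k m : ℤ, k ≤ m → ∀ Q ∈ 𝔻 m, ∀ Q' ∈ 𝔻 k, Q ⊆ Q' ∨ Q ∩ Q' = ∅) ∧
          -- (iii) unique ancestor in each earlier generation
          (∀ k, ∀ Q ∈ 𝔻 k, ∀ m : ℤ, m < k → ∃! Q' : Set (Pt n), Q' ∈ 𝔻 m ∧ Q ⊆ Q') ∧
          -- (iv) diameter bound
          (∀ k, ∀ Q ∈ 𝔻 k, EMetric.diam Q ≤ ENNReal.ofReal (A₁ * 2 ^ (-k))) ∧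
          -- (v) each cube contains a surface ball
          (∀ k, ∀ Q ∈ 𝔻 k, ∃ x ∈ Γ, ball x (a₀ * 2 ^ (-k)) ∩ Γ ⊆ Q) ∧
          -- (vi) small boundary layers
          (∀ k, ∀ Q ∈ 𝔻 k, ∀ ρ : ℝ, 0 < ρ → ρ < a₀ →
            μH[(d : ℝ)] {p ∈ Q | infDist p (Γ \ Q) ≤ ρ * 2 ^ (-k)} ≤
              ENNReal.ofReal (A₁ * ρ ^ γ) * μH[(d : ℝ)] Q) := by
    classical
  have hc0 : 0 < DC.creal d C₀ := DC.creal_pos hC₀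
  have hc1 : DC.creal d C₀ ≤ 1/2 := DC.creal_le hd hC₀
  set γ : ℝ := Real.log (1 - DC.creal d C₀)⁻¹ / (8 * Real.log 2) with hγdef
  have hγpos : 0 < γ := by
    apply div_pos
    · rw [Real.log_inv]
      have := Real.log_neg (by linarith : (0:ℝ) < 1 - DC.creal d C₀)
        (by linarith : (1:ℝ) - DC.creal d C₀ < 1)
      linarith
    · have := Real.log_pos (by norm_num : (1:ℝ) < 2)
      linarith
  refine ⟨1/64, 10, γ, by norm_num, by norm_num, hγpos, ?_⟩
  intro Γ hΓc hΓne hAR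
  obtain ⟨N, hNS⟩ := DC.exists_netsys hΓne
  obtain ⟨E, hE⟩ := DC.exists_E hNS
  have hΓms : MeasurableSet Γ := hΓc.measurableSet
  set J : ℤ → ℤ := fun k => (k+3)/4 with hJdef
  refine ⟨fun k => (fun x => DC.cube N E Γ (J k) x) '' (N (J k)), ?_, ?_, ?_, ?_, ?_, ?_, ?_, ?_⟩
  · -- countable
    intro k
    exact (((hNS.sep (J k)).countable (DC.sc_pos (J k)))).image _
  · -- measurable & subset
    rintro k Q ⟨x, hx, rfl⟩
    exact ⟨DC.cubeMS hNS hE hΓms (J k) x, DC.cube_subset N E Γ (J k) x⟩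
  · -- cover
    intro k
    ext q
    constructor
    · rintro ⟨Q, ⟨x, hx, rfl⟩, hq⟩
      exact DC.cube_subset N E Γ (J k) x hq
    · intro hq
      exact ⟨DC.cube N E Γ (J k) (DC.beta N E q (J k)),
        ⟨DC.beta N E q (J k), DC.beta_mem hNS hE hq (J k), rfl⟩, DC.mem_cube q hq (J k)⟩
  · -- nesting
    rintro k m hkm Q ⟨x, hx, rfl⟩ Q' ⟨x', hx', rfl⟩
    have hle : J k ≤ J m := DC.Jmono hkm
    set i : ℕ := (J m - J k).toNat with hidef
    have hJm : J m = J k + (i:ℤ) := by omega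
    have hbet : ∀ q ∈ DC.cube N E Γ (J m) x, DC.beta N E q (J k) = DC.Fit N (J k) i x := by
      intro q hq
      have h := DC.beta_coh hNS hE hq.1 (J k) i
      rw [← hJm] at h
      rw [h, hq.2]
    by_cases hc : DC.Fit N (J k) i x = x'
    · left
      intro q hq
      exact ⟨hq.1, by rw [hbet q hq, hc]⟩
    · right
      ext q
      simp only [Set.mem_inter_iff, Set.mem_empty_iff_false, iff_false]
      rintro ⟨hq1, hq2⟩
      exact hc ((hbet q hq1).symm.trans hq2.2)
  · -- unique ancestor
    rintro k Q ⟨x, hx, rfl⟩ m' hm'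
    have hle : J m' ≤ J k := DC.Jmono hm'.le
    set i : ℕ := (J k - J m').toNat with hidef
    have hJk : J k = J m' + (i:ℤ) := by omega
    have hbet : ∀ q ∈ DC.cube N E Γ (J k) x, DC.beta N E q (J m') = DC.Fit N (J m') i x := by
      intro q hq
      have h := DC.beta_coh hNS hE hq.1 (J m') i
      rw [← hJk] at h
      rw [h, hq.2]
    have hxQ : x ∈ DC.cube N E Γ (J k) x := DC.mem_cube_self hNS hE hx
    have hFx : DC.Fit N (J m') i x ∈ N (J m') := by
      apply DC.Fit_mem_net hNS
      rw [← hJk]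
      exact hx
    refine ⟨DC.cube N E Γ (J m') (DC.Fit N (J m') i x),
      ⟨⟨DC.Fit N (J m') i x, hFx, rfl⟩, fun q hq => ⟨hq.1, hbet q hq⟩⟩, ?_⟩
    rintro Q'' ⟨⟨x'', hx'', rfl⟩, hsub⟩
    have h1 : DC.beta N E x (J m') = x'' := (hsub hxQ).2
    have h2 : DC.beta N E x (J m') = DC.Fit N (J m') i x := hbet x hxQ
    rw [← h1, ← h2]
  · -- diameter
    rintro k Q ⟨x, hx, rfl⟩
    apply EMetric.diam_le
    intro p hp q hq
    rw [edist_dist]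
    apply ENNReal.ofReal_le_ofReal
    have hp5 : dist p x ≤ 5 * DC.sc (J k) := by
      have := DC.beta_dist hNS hE hp.1 (J k)
      rwa [hp.2] at this
    have hq5 : dist q x ≤ 5 * DC.sc (J k) := by
      have := DC.beta_dist hNS hE hq.1 (J k)
      rwa [hq.2] at this
    have htr : dist p q ≤ dist p x + dist x q := dist_triangle _ _ _
    rw [dist_comm x q] at htr
    have hs := DC.sc_J_le k
    have h2 : (0:ℝ) < (2:ℝ)^(-k) := by positivity
    nlinarith
  · -- inner ball
    rintro k Q ⟨x, hx, rfl⟩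
    refine ⟨x, hNS.sub (J k) hx, ?_⟩
    have hsub2 := DC.ball_subset_cube hNS hE hx
    refine Subset.trans ?_ hsub2
    apply Set.inter_subset_inter_left
    apply ball_subset_ball
    have := DC.le_sc_J k
    linarith
  · -- boundary layers
    rintro k Q ⟨x, hx, rfl⟩ ρ hρ0 hρa
    have hρ1 : ρ < 1 := by linarith
    set t : ℕ := ⌊Real.logb 2 ρ⁻¹ / 8⌋₊ with htdef
    have hsub : {p ∈ DC.cube N E Γ (J k) x |
          infDist p (Γ \ DC.cube N E Γ (J k) x) ≤ ρ * 2 ^ (-k)} ⊆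
        {p | p ∈ DC.cube N E Γ (J k) x ∧
          infDist p (Γ \ DC.cube N E Γ (J k) x) ≤ 12 * DC.sc (J k + 2*(t:ℤ))} := by
      rintro p ⟨hp1, hp2⟩
      refine ⟨hp1, le_trans hp2 ?_⟩
      have h1 : ρ * (2:ℝ)^(-k) ≤ ρ * (8 * DC.sc (J k)) :=
        mul_le_mul_of_nonneg_left (DC.le_sc_J k) hρ0.le
      have h2 : ρ ≤ ((16:ℝ)⁻¹) ^ (2*t) := DC.rho_le_pow hρ0 hρ1
      have h3 : DC.sc (J k + 2*(t:ℤ)) = DC.sc (J k) * ((16:ℝ)⁻¹)^(2*t) := by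
        have := DC.sc_add_nat (J k) (2*t)
        rwa [show ((2*t : ℕ):ℤ) = 2*(t:ℤ) by push_cast; ring] at this
      have hscpos := DC.sc_pos (J k)
      rw [h3]
      calc ρ * (2:ℝ)^(-k) ≤ ρ * (8 * DC.sc (J k)) := h1
        _ ≤ ((16:ℝ)⁻¹)^(2*t) * (8 * DC.sc (J k)) :=
            mul_le_mul_of_nonneg_right h2 (by linarith)
        _ ≤ 12 * (DC.sc (J k) * ((16:ℝ)⁻¹)^(2*t)) := by
            have hp16 : (0:ℝ) < ((16:ℝ)⁻¹)^(2*t) := by positivity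
            nlinarith
    calc μH[(d:ℝ)] {p ∈ DC.cube N E Γ (J k) x |
            infDist p (Γ \ DC.cube N E Γ (J k) x) ≤ ρ * 2 ^ (-k)}
        ≤ μH[(d:ℝ)] {p | p ∈ DC.cube N E Γ (J k) x ∧
            infDist p (Γ \ DC.cube N E Γ (J k) x) ≤ 12 * DC.sc (J k + 2*(t:ℤ))} :=
          measure_mono hsub
      _ ≤ ENNReal.ofReal (1 - DC.creal d C₀) ^ t * μH[(d:ℝ)] (DC.cube N E Γ (J k) x) :=
          DC.layer_decay hNS hE hΓms hd hC₀ hAR hx t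
      _ ≤ ENNReal.ofReal (10 * ρ ^ γ) * μH[(d:ℝ)] (DC.cube N E Γ (J k) x) := by
          apply mul_le_mul_left
          rw [← ENNReal.ofReal_pow (by linarith : (0:ℝ) ≤ 1 - DC.creal d C₀)]
          apply ENNReal.ofReal_le_ofReal
          have hdec := DC.decay_le hc0 hc1 hρ0 hρ1
          have hrpow : (0:ℝ) ≤ ρ ^ γ := Real.rpow_nonneg hρ0.le _
          rw [hγdef]
          linarith
end
end

section
/- Let n, d be integers with 1 ≤ d < n−1, Γ ⊂ ℝⁿ a closed d-Ahlfors regular set with constant C₀, and α > 0. Then there exist constants c, C > 0, depending only on n, d, C₀, α, such that for every measurable function h : Ω → [0, ∞], every q₀ ∈ Γ and every r > 0: (upper bound) ∫_{B(q₀,r) ∩ Ω} h(X) δ(X)^{d−n+2} dX ≤ C ∫_{B(q₀,(α+2)r) ∩ Γ} ( ∫_{Γ^α(q) ∩ B(q,(α+1)r)} h(X) δ(X)^{2−n} dX ) dσ(q), and (lower bound) ∫_{B(q₀,r) ∩ Ω} h(X) δ(X)^{d−n+2} dX ≥ c ∫_{B(q₀,r/2) ∩ Γ} ( ∫_{Γ^α(q)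 ∩ B(q,r/2)} h(X) δ(X)^{2−n} dX ) dσ(q). Here the inner integrals are with respect to Lebesgue measure on ℝⁿ and the outer integrals with respect to σ = H^d restricted to Γ. -/
open MeasureTheory Metric Set
open scoped ENNReal NNReal Topology

noncomputable section

/-- The nontangential cone `Γ^α(q) = {X ∈ Ω : |X - q| < (1+α)δ(X)}`. -/
def NTCone (n : ℕ) (Γ : Set (Pt n)) (α : ℝ) (q : Pt n) : Set (Pt n) :=
  {X | X ∉ Γ ∧ dist X q < (1 + α) * infDist X Γ}

lemma ntcone_isOpen (n : ℕ) {Γ : Set (Pt n)} (hΓ : IsClosed Γ) (α : ℝ) (q : Pt n) :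
    IsOpen (NTCone n Γ α q) := by
  have : NTCone n Γ α q = Γᶜ ∩ {X | dist X q < (1 + α) * infDist X Γ} := rfl
  rw [this]
  exact hΓ.isOpen_compl.inter <| isOpen_lt (continuous_id.dist continuous_const)
    (continuous_const.mul (continuous_infDist_pt Γ))

lemma coneProd_isOpen (n : ℕ) {Γ : Set (Pt n)} (hΓ : IsClosed Γ) (α : ℝ)
    (q₀ : Pt n) (R ρ : ℝ) :
    IsOpen {p : Pt n × Pt n | p.1 ∈ ball q₀ R ∧ p.2 ∈ NTCone n Γ α p.1 ∩ ball p.1 ρ} := by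
  have h1 : IsOpen {p : Pt n × Pt n | dist p.1 q₀ < R} :=
    isOpen_lt (continuous_fst.dist continuous_const) continuous_const
  have h2 : IsOpen {p : Pt n × Pt n | p.2 ∉ Γ} := hΓ.isOpen_compl.preimage continuous_snd
  have h3 : IsOpen {p : Pt n × Pt n | dist p.2 p.1 < (1 + α) * infDist p.2 Γ} :=
    isOpen_lt (continuous_snd.dist continuous_fst)
      (continuous_const.mul ((continuous_infDist_pt Γ).comp continuous_snd))
  have h4 : IsOpen {p : Pt n × Pt n | dist p.2 p.1 < ρ} :=
    isOpen_lt (continuous_snd.dist continuous_fst) continuous_const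
  have : {p : Pt n × Pt n | p.1 ∈ ball q₀ R ∧ p.2 ∈ NTCone n Γ α p.1 ∩ ball p.1 ρ}
      = ({p : Pt n × Pt n | dist p.1 q₀ < R} ∩ ({p | p.2 ∉ Γ} ∩
          {p | dist p.2 p.1 < (1 + α) * infDist p.2 Γ})) ∩ {p | dist p.2 p.1 < ρ} := by
    ext p
    simp only [NTCone, mem_setOf_eq, mem_inter_iff, mem_ball]
    tauto
  rw [this]
  exact ((h1.inter (h2.inter h3)).inter h4)

/-- Tonelli for a "cone" double integral. -/
lemma cone_fubini {E : Type*} [MeasurableSpace E] (σμ ν : Measure E) [SFinite σμ] [SFinite ν]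
    (f : E → ℝ≥0∞) (hf : Measurable f)
    (S : Set E) (hS : MeasurableSet S) (T : E → Set E) (hT : ∀ q, MeasurableSet (T q))
    (hA : MeasurableSet {p : E × E | p.1 ∈ S ∧ p.2 ∈ T p.1}) :
    ∫⁻ q in S, ∫⁻ X in T q, f X ∂ν ∂σμ
      = ∫⁻ X, f X * σμ {q | q ∈ S ∧ X ∈ T q} ∂ν := by
  set A : Set (E × E) := {p | p.1 ∈ S ∧ p.2 ∈ T p.1} with hAdef
  have step1 : ∫⁻ q in S, ∫⁻ X in T q, f X ∂ν ∂σμ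
      = ∫⁻ q, ∫⁻ X, A.indicator (fun p => f p.2) (q, X) ∂ν ∂σμ := by
    rw [← lintegral_indicator hS]
    congr 1; ext q
    by_cases hq : q ∈ S
    · rw [indicator_of_mem hq, ← lintegral_indicator (hT q)]
      congr 1; ext X
      by_cases hX : X ∈ T q
      · rw [indicator_of_mem hX, indicator_of_mem (show (q, X) ∈ A from ⟨hq, hX⟩)]
      · rw [indicator_of_notMem hX,
          indicator_of_notMem (show (q, X) ∉ A from fun hc => hX hc.2)]
    · rw [indicator_of_notMem hq]
      have h0 : ∀ X, A.indicator (fun p : E × E => f p.2) (q, X) = 0 := fun X =>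
        indicator_of_notMem (fun hc => hq hc.1) _
      simp [h0]
  have hmeas : AEMeasurable
      (Function.uncurry fun q X => A.indicator (fun p : E × E => f p.2) (q, X)) (σμ.prod ν) :=
    ((hf.comp measurable_snd).indicator hA).aemeasurable
  rw [step1, lintegral_lintegral_swap hmeas]
  congr 1; ext X
  have hslice : MeasurableSet {q | q ∈ S ∧ X ∈ T q} := by
    have := hA.preimage ((measurable_id.prodMk (measurable_const : Measurable fun _ : E => X)))
    simpa [A, Set.preimage, mem_setOf_eq] using this
  calc ∫⁻ q, A.indicator (fun p => f p.2) (q, X) ∂σμ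
      = ∫⁻ q, {q | q ∈ S ∧ X ∈ T q}.indicator (fun _ => f X) q ∂σμ := by
        refine lintegral_congr fun q => ?_
        by_cases hq : q ∈ S ∧ X ∈ T q
        · rw [indicator_of_mem (show (q, X) ∈ A from hq),
            indicator_of_mem (show q ∈ {q | q ∈ S ∧ X ∈ T q} from hq)]
        · rw [indicator_of_notMem (show (q, X) ∉ A from hq),
            indicator_of_notMem (show q ∉ {q | q ∈ S ∧ X ∈ T q} from hq)]
    _ = f X * σμ {q | q ∈ S ∧ X ∈ T q} := by
        rw [lintegral_indicator hslice, setLIntegral_const]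

/-- Equivalence between the Carleson integral over a tent and the boundary integral of
the truncated square function (inequalities (2.33)–(2.35) of the paper, with
`h = |∇u|²`): for every nonnegative measurable `h`,
`∫_{T(Δ)} h δ^{d-n+2} dX ≲ ∫_{(α+2)Δ} ∫_{Γ^α(q) ∩ B(q,(α+1)r)} h δ^{2-n} dX dσ(q)` and
`∫_{T(Δ)} h δ^{d-n+2} dX ≳ ∫_{Δ/2} ∫_{Γ^α(q) ∩ B(q,r/2)} h δ^{2-n} dX dσ(q)`. -/
theorem carleson_square_function_equiv (n d : ℕ) (C₀ : ℝ)
    (hd : 1 ≤ d) (hdn : d + 1 < n) (hC₀ : 1 ≤ C₀) (α : ℝ) (hα : 0 < α) :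
    ∃ c C : ℝ, 0 < c ∧ 0 < C ∧
      ∀ Γ : Set (Pt n), IsClosed Γ → Γ.Nonempty → AhlforsRegular n d C₀ Γ →
        ∀ h : Pt n → ℝ≥0∞, Measurable h →
          ∀ q₀ ∈ Γ, ∀ r : ℝ, 0 < r →
            ((∫⁻ X in ball q₀ r \ Γ,
                h X * ENNReal.ofReal (infDist X Γ ^ ((d : ℝ) - n + 2))) ≤
              ENNReal.ofReal C *
                ∫⁻ q in ball q₀ ((α + 2) * r),
                  (∫⁻ X in NTCone n Γ α q ∩ ball q ((α + 1) * r),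
                    h X * ENNReal.ofReal (infDist X Γ ^ ((2 : ℝ) - n)))
                  ∂(μH[(d : ℝ)].restrict Γ)) ∧
            (ENNReal.ofReal c *
                ∫⁻ q in ball q₀ (r / 2),
                  (∫⁻ X in NTCone n Γ α q ∩ ball q (r / 2),
                    h X * ENNReal.ofReal (infDist X Γ ^ ((2 : ℝ) - n)))
                  ∂(μH[(d : ℝ)].restrict Γ) ≤
              ∫⁻ X in ball q₀ r \ Γ,
                h X * ENNReal.ofReal (infDist X Γ ^ ((d : ℝ) - n + 2))) := by
  have hC₀pos : (0:ℝ) < C₀ := lt_of_lt_of_le one_pos hC₀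
  refine ⟨(C₀ * (2 + α) ^ d)⁻¹, C₀ / α ^ d, by positivity, by positivity, ?_⟩
  intro Γ hΓ hΓne hAhl h hh q₀ hq₀ r hr
  set σμ : Measure (Pt n) := μH[(d : ℝ)].restrict Γ with hσμ
  -- σ-finiteness of the restricted Hausdorff measure
  haveI : SigmaFinite σμ := by
    refine ⟨⟨⟨fun k => ball q₀ (k + 1), fun _ => trivial, fun k => ?_, ?_⟩⟩⟩
    · rw [hσμ, Measure.restrict_apply' hΓ.measurableSet]
      exact lt_of_le_of_lt (hAhl q₀ hq₀ (k + 1) (by positivity)).2 ENNReal.ofReal_lt_top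
    · refine iUnion_eq_univ_iff.2 fun X => ⟨⌈dist X q₀⌉₊, ?_⟩
      have := Nat.le_ceil (dist X q₀)
      exact mem_ball.2 (by push_cast; linarith)
  have hfm : Measurable fun X : Pt n => h X * ENNReal.ofReal (infDist X Γ ^ ((2:ℝ) - n)) :=
    hh.mul (ENNReal.measurable_ofReal.comp (measurable_infDist.pow measurable_const))
  have hTmeas : ∀ (ρ : ℝ) (q : Pt n), MeasurableSet (NTCone n Γ α q ∩ ball q ρ) :=
    fun ρ q => ((ntcone_isOpen n hΓ α q).inter isOpen_ball).measurableSet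
  have hSet : MeasurableSet (ball q₀ r \ Γ) := measurableSet_ball.diff hΓ.measurableSet
  -- pointwise splitting of the tent power
  have hδpos : ∀ X : Pt n, X ∉ Γ → 0 < infDist X Γ :=
    fun X hX => (hΓ.notMem_iff_infDist_pos hΓne).1 hX
  have hpow : ∀ X : Pt n, X ∉ Γ →
      ENNReal.ofReal (infDist X Γ ^ ((d : ℝ) - n + 2))
        = ENNReal.ofReal (infDist X Γ ^ ((2:ℝ) - n)) * ENNReal.ofReal (infDist X Γ ^ d) := by
    intro X hX
    rw [← ENNReal.ofReal_mul (Real.rpow_nonneg (hδpos X hX).le _)]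
    congr 1
    have he : ((d : ℝ) - n + 2) = ((2:ℝ) - n) + (d : ℕ) := by push_cast; ring
    rw [he, Real.rpow_add (hδpos X hX), Real.rpow_natCast]
  have hTentEq : (∫⁻ X in ball q₀ r \ Γ, h X * ENNReal.ofReal (infDist X Γ ^ ((d : ℝ) - n + 2)))
      = ∫⁻ X in ball q₀ r \ Γ,
          (h X * ENNReal.ofReal (infDist X Γ ^ ((2:ℝ) - n))) * ENNReal.ofReal (infDist X Γ ^ d) := by
    refine setLIntegral_congr_fun hSet fun X hX => ?_
    rw [hpow X hX.2, mul_assoc]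
  constructor
  · -- upper bound
    set Q' : Pt n → Set (Pt n) := fun X =>
      {q | q ∈ ball q₀ ((α + 2) * r) ∧ X ∈ NTCone n Γ α q ∩ ball q ((α + 1) * r)} with hQ'
    have hFub : (∫⁻ q in ball q₀ ((α + 2) * r),
          (∫⁻ X in NTCone n Γ α q ∩ ball q ((α + 1) * r),
            h X * ENNReal.ofReal (infDist X Γ ^ ((2 : ℝ) - n))) ∂σμ)
        = ∫⁻ X, (h X * ENNReal.ofReal (infDist X Γ ^ ((2:ℝ) - n))) * σμ (Q' X) :=
      cone_fubini σμ volume _ hfm _ measurableSet_ball _ (hTmeas _)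
        (coneProd_isOpen n hΓ α q₀ ((α + 2) * r) ((α + 1) * r)).measurableSet
    have hpt : ∀ X ∈ ball q₀ r \ Γ,
        ENNReal.ofReal (infDist X Γ ^ d) ≤ ENNReal.ofReal (C₀ / α ^ d) * σμ (Q' X) := by
      intro X hX
      have hδp := hδpos X hX.2
      set δ := infDist X Γ with hδdef
      obtain ⟨qb, hqbΓ, hqbd⟩ := hΓ.exists_infDist_eq_dist hΓne X
      have hδr : δ < r := lt_of_le_of_lt (infDist_le_dist_of_mem hq₀) (mem_ball.1 hX.1)
      have hsub : ball qb (α * δ) ∩ Γ ⊆ Q' X := by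
        rintro q ⟨hqb, hqΓ⟩
        have hdq : dist q qb < α * δ := mem_ball.1 hqb
        have hdxqb : dist X qb = δ := hqbd.symm
        have hdq2 : dist qb q < α * δ := by rw [dist_comm]; exact hdq
        have hXq : dist X q < (1 + α) * δ := by
          calc dist X q ≤ dist X qb + dist qb q := dist_triangle _ _ _
            _ < δ + α * δ := by rw [hdxqb]; exact (add_lt_add_iff_left δ).2 hdq2
            _ = (1 + α) * δ := by ring
        refine ⟨mem_ball.2 ?_, ⟨hX.2, hXq⟩, mem_ball.2 ?_⟩
        · calc dist q q₀ ≤ dist q X + dist X q₀ := dist_triangle _ _ _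
            _ < (1 + α) * δ + r := by
                rw [dist_comm q X]; linarith [mem_ball.1 hX.1]
            _ ≤ (1 + α) * r + r := by nlinarith
            _ = (α + 2) * r := by ring
        · calc dist X q < (1 + α) * δ := hXq
            _ < (1 + α) * r := by nlinarith
            _ = (α + 1) * r := by ring
      have hlow := (hAhl qb hqbΓ (α * δ) (by positivity)).1
      have hσ : μH[(d:ℝ)] (ball qb (α * δ) ∩ Γ) ≤ σμ (Q' X) := by
        rw [hσμ, Measure.restrict_apply' hΓ.measurableSet]
        exact measure_mono fun q hq => ⟨hsub hq, hq.2⟩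
      calc ENNReal.ofReal (δ ^ d)
          = ENNReal.ofReal (C₀ / α ^ d) * ENNReal.ofReal (C₀⁻¹ * (α * δ) ^ d) := by
            rw [← ENNReal.ofReal_mul (by positivity)]
            congr 1
            rw [mul_pow]
            field_simp
        _ ≤ ENNReal.ofReal (C₀ / α ^ d) * σμ (Q' X) :=
            mul_le_mul_right (hlow.trans hσ) _
    rw [hTentEq, hFub]
    calc ∫⁻ X in ball q₀ r \ Γ,
          (h X * ENNReal.ofReal (infDist X Γ ^ ((2:ℝ) - n))) * ENNReal.ofReal (infDist X Γ ^ d)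
        ≤ ∫⁻ X in ball q₀ r \ Γ,
            ENNReal.ofReal (C₀ / α ^ d) *
              ((h X * ENNReal.ofReal (infDist X Γ ^ ((2:ℝ) - n))) * σμ (Q' X)) := by
          refine lintegral_mono_ae ((ae_restrict_iff' hSet).2 (ae_of_all _ fun X hX => ?_))
          rw [mul_left_comm]
          exact mul_le_mul_right (hpt X hX) _
      _ ≤ ∫⁻ X, ENNReal.ofReal (C₀ / α ^ d) *
            ((h X * ENNReal.ofReal (infDist X Γ ^ ((2:ℝ) - n))) * σμ (Q' X)) :=
          setLIntegral_le_lintegral _ _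
      _ = ENNReal.ofReal (C₀ / α ^ d) *
            ∫⁻ X, (h X * ENNReal.ofReal (infDist X Γ ^ ((2:ℝ) - n))) * σμ (Q' X) :=
          lintegral_const_mul' _ _ ENNReal.ofReal_ne_top
  · -- lower bound
    set Q : Pt n → Set (Pt n) := fun X =>
      {q | q ∈ ball q₀ (r / 2) ∧ X ∈ NTCone n Γ α q ∩ ball q (r / 2)} with hQ
    have hFub : (∫⁻ q in ball q₀ (r / 2),
          (∫⁻ X in NTCone n Γ α q ∩ ball q (r / 2),
            h X * ENNReal.ofReal (infDist X Γ ^ ((2 : ℝ) - n))) ∂σμ)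
        = ∫⁻ X, (h X * ENNReal.ofReal (infDist X Γ ^ ((2:ℝ) - n))) * σμ (Q X) :=
      cone_fubini σμ volume _ hfm _ measurableSet_ball _ (hTmeas _)
        (coneProd_isOpen n hΓ α q₀ (r / 2) (r / 2)).measurableSet
    have hQempty : ∀ X, X ∉ ball q₀ r \ Γ → Q X = ∅ := by
      intro X hX
      ext q
      simp only [hQ, mem_setOf_eq, mem_empty_iff_false, iff_false, not_and]
      intro hq1 hq2
      exact absurd ⟨mem_ball.2 (by
        calc dist X q₀ ≤ dist X q + dist q q₀ := dist_triangle _ _ _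
          _ < r / 2 + r / 2 := add_lt_add (mem_ball.1 hq2.2) (mem_ball.1 hq1)
          _ = r := by ring), hq2.1.1⟩ hX
    have hres : (∫⁻ X, (h X * ENNReal.ofReal (infDist X Γ ^ ((2:ℝ) - n))) * σμ (Q X))
        = ∫⁻ X in ball q₀ r \ Γ,
            (h X * ENNReal.ofReal (infDist X Γ ^ ((2:ℝ) - n))) * σμ (Q X) := by
      rw [← lintegral_indicator hSet]
      congr 1; ext X
      by_cases hX : X ∈ ball q₀ r \ Γ
      · rw [indicator_of_mem hX]
      · rw [indicator_of_notMem hX, hQempty X hX, measure_empty, mul_zero]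
    have hpt : ∀ X ∈ ball q₀ r \ Γ,
        σμ (Q X) ≤ ENNReal.ofReal (C₀ * (2 + α) ^ d) * ENNReal.ofReal (infDist X Γ ^ d) := by
      intro X hX
      have hδp := hδpos X hX.2
      set δ := infDist X Γ with hδdef
      obtain ⟨qb, hqbΓ, hqbd⟩ := hΓ.exists_infDist_eq_dist hΓne X
      have hsub : Q X ∩ Γ ⊆ ball qb ((2 + α) * δ) ∩ Γ := by
        rintro q ⟨⟨hq1, hq2⟩, hqΓ⟩
        refine ⟨mem_ball.2 ?_, hqΓ⟩
        have hXq : dist X q < (1 + α) * δ := hq2.1.2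
        calc dist q qb ≤ dist q X + dist X qb := dist_triangle _ _ _
          _ < (1 + α) * δ + δ := by
              rw [dist_comm q X]; rw [← hqbd]; linarith
          _ = (2 + α) * δ := by ring
      have hup := (hAhl qb hqbΓ ((2 + α) * δ) (by positivity)).2
      have hσ : σμ (Q X) ≤ μH[(d:ℝ)] (ball qb ((2 + α) * δ) ∩ Γ) := by
        rw [hσμ, Measure.restrict_apply' hΓ.measurableSet]
        exact measure_mono hsub
      refine (hσ.trans hup).trans (le_of_eq ?_)
      rw [← ENNReal.ofReal_mul (by positivity)]
      congr 1
      rw [mul_pow]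
      ring
    have hcC : ENNReal.ofReal ((C₀ * (2 + α) ^ d)⁻¹) * ENNReal.ofReal (C₀ * (2 + α) ^ d) = 1 := by
      rw [← ENNReal.ofReal_mul (by positivity), inv_mul_cancel₀ (by positivity), ENNReal.ofReal_one]
    rw [hFub, hres, hTentEq]
    calc ENNReal.ofReal ((C₀ * (2 + α) ^ d)⁻¹) *
          ∫⁻ X in ball q₀ r \ Γ,
            (h X * ENNReal.ofReal (infDist X Γ ^ ((2:ℝ) - n))) * σμ (Q X)
        = ∫⁻ X in ball q₀ r \ Γ, ENNReal.ofReal ((C₀ * (2 + α) ^ d)⁻¹) *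
            ((h X * ENNReal.ofReal (infDist X Γ ^ ((2:ℝ) - n))) * σμ (Q X)) :=
          (lintegral_const_mul' _ _ ENNReal.ofReal_ne_top).symm
      _ ≤ ∫⁻ X in ball q₀ r \ Γ,
            (h X * ENNReal.ofReal (infDist X Γ ^ ((2:ℝ) - n))) * ENNReal.ofReal (infDist X Γ ^ d) := by
          refine lintegral_mono_ae ((ae_restrict_iff' hSet).2 (ae_of_all _ fun X hX => ?_))
          calc ENNReal.ofReal ((C₀ * (2 + α) ^ d)⁻¹) *
                ((h X * ENNReal.ofReal (infDist X Γ ^ ((2:ℝ) - n))) * σμ (Q X))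
              ≤ ENNReal.ofReal ((C₀ * (2 + α) ^ d)⁻¹) *
                ((h X * ENNReal.ofReal (infDist X Γ ^ ((2:ℝ) - n))) *
                  (ENNReal.ofReal (C₀ * (2 + α) ^ d) * ENNReal.ofReal (infDist X Γ ^ d))) :=
                mul_le_mul_right (mul_le_mul_right (hpt X hX) _) _
            _ = (ENNReal.ofReal ((C₀ * (2 + α) ^ d)⁻¹) * ENNReal.ofReal (C₀ * (2 + α) ^ d)) *
                ((h X * ENNReal.ofReal (infDist X Γ ^ ((2:ℝ) - n))) *
                  ENNReal.ofReal (infDist X Γ ^ d)) := by ring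
            _ = (h X * ENNReal.ofReal (infDist X Γ ^ ((2:ℝ) - n))) *
                  ENNReal.ofReal (infDist X Γ ^ d) := by rw [hcC, one_mul]
end
end
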